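/- arXiv:1805.02273 — 12 statements merged into one kernel-verified Lean document; each statement's English description precedes it below -/
import Mathlib

section
/- Let A be an F-algebra and let R_1, ..., R_n be finitely many S-subalgebras of A each satisfying R_i F = A. Then R = ∩ R_i satisfies RF = A. In particular, a finite intersection of S-nice subalgebras of A is an S-nice subalgebra of A. -/
lemma stmt3_aux {S F A : Type*} [CommRing S] [IsDomain S] [Field F] [Ring A]
    [Algebra S F] [IsFractionRing S F] [Algebra F A] [Algebra S A] [IsScalarTower S F A]
    (R : Subalgebra S A) (a : A) (ha : a ∈ Submodule.span F (R : Set A)) :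
    ∃ c ∈ nonZeroDivisors S, c • a ∈ R := by
  induction ha using Submodule.span_induction with
  | mem x hx => exact ⟨1, one_mem _, by simpa using hx⟩
  | zero => exact ⟨1, one_mem _, by simpa using R.zero_mem⟩
  | add x y _ _ hx hy =>
    obtain ⟨c, hc, hcx⟩ := hx
    obtain ⟨d, hd, hdy⟩ := hy
    refine ⟨c * d, mul_mem hc hd, ?_⟩
    rw [smul_add]
    refine add_mem ?_ ?_
    · rw [mul_comm, mul_smul]; exact R.smul_mem hcx d
    · rw [mul_smul]; exact R.smul_mem hdy c
  | smul f x _ hx =>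
    obtain ⟨c, hc, hcx⟩ := hx
    obtain ⟨b, s, hs⟩ := IsLocalization.exists_integer_multiple (nonZeroDivisors S) f
    refine ⟨(b : S) * c, mul_mem b.2 hc, ?_⟩
    have : ((b : S) * c) • (f • x) = s • (c • x) := by
      rw [mul_smul, smul_comm c f x, ← smul_assoc, ← hs, algebraMap_smul]
    rw [this]
    exact R.smul_mem hcx s

/-- If `R₁, …, Rₙ` are finitely many `S`-subalgebras of `A`, each with
`Rᵢ F = A`, then `R = ⋂ Rᵢ` satisfies `RF = A`; in particular, a finite intersection of
`S`-nice subalgebras (those with moreover `Rᵢ ∩ F = S`) is `S`-nice. -/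
theorem stmt3 {S F A : Type*} [CommRing S] [IsDomain S] [Field F] [Ring A]
    [Algebra S F] [IsFractionRing S F] [Algebra F A] [Algebra S A] [IsScalarTower S F A]
    {ι : Type*} [Fintype ι] [Nonempty ι]
    (R : ι → Subalgebra S A)
    (hspan : ∀ i, Submodule.span F ((R i : Set A)) = ⊤) :
    Submodule.span F ((⨅ i, R i : Subalgebra S A) : Set A) = ⊤ ∧
      ((∀ i, ∀ x : F, algebraMap F A x ∈ R i ↔ ∃ s : S, algebraMap S F s = x) →
        ∀ x : F, algebraMap F A x ∈ (⨅ i, R i : Subalgebra S A) ↔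
          ∃ s : S, algebraMap S F s = x) := by
  constructor
  · rw [eq_top_iff]
    rintro a -
    classical
    choose c hc hcR using fun i => stmt3_aux (R i) a (by rw [hspan i]; trivial)
    set d : S := ∏ i, c i with hd
    have hdnzd : d ∈ nonZeroDivisors S := prod_mem fun i _ => hc i
    have hdmem : d • a ∈ (⨅ i, R i : Subalgebra S A) := by
      rw [Algebra.mem_iInf]
      intro i
      have : d • a = (∏ j ∈ Finset.univ.erase i, c j) • (c i • a) := by
        rw [← mul_smul, Finset.prod_erase_mul _ _ (Finset.mem_univ i)]
      rw [this]
      exact (R i).smul_mem (hcR i) _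
    have hne : algebraMap S F d ≠ 0 :=
      IsFractionRing.to_map_ne_zero_of_mem_nonZeroDivisors hdnzd
    have : a = (algebraMap S F d)⁻¹ • (d • a) := by
      rw [← algebraMap_smul F d a, inv_smul_smul₀ hne]
    rw [this]
    exact Submodule.smul_mem _ _ (Submodule.subset_span hdmem)
  · intro h x
    constructor
    · intro hx
      exact (h (Classical.arbitrary ι) x).mp (Algebra.mem_iInf.mp hx _)
    · rintro ⟨s, rfl⟩
      rw [Algebra.mem_iInf]
      intro i
      exact (h i _).mpr ⟨s, rfl⟩
end

section
/- Let B be an S-stable basis of the F-algebra A over F and let x_0 be a nonzero element of A not in B. Then there exists b_0 ∈ B such that {x_0} ∪ (B \ {b_0}) is an S-stable basis of A over F. -/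
/-- A basis of `A` over `F`, as a set. -/
def IsBasisSet (F : Type*) {A : Type*} [Field F] [Ring A] [Algebra F A] (B : Set A) : Prop :=
  LinearIndependent F ((↑) : B → A) ∧ Submodule.span F B = ⊤

/-- `B` is an `S`-stable basis of `A` over `F`: it is a basis and some basis `C` of `A`
over `F` stabilizes it, i.e. `c * b ∈ Σ_{y ∈ B} S y` for all `c ∈ C`, `b ∈ B`. -/
def IsStableBasis (S : Type*) (F : Type*) {A : Type*} [CommRing S] [Field F] [Ring A]
    [Algebra S F] [Algebra F A] [Algebra S A] [IsScalarTower S F A] (B : Set A) : Prop :=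
  IsBasisSet F B ∧ ∃ C : Set A, IsBasisSet F C ∧
    ∀ c ∈ C, ∀ b ∈ B, c * b ∈ Submodule.span S B

/-- If `B` is an `S`-stable basis of `A` over `F` and `x₀ ≠ 0` with `x₀ ∉ B`,
then there is `b₀ ∈ B` such that `{x₀} ∪ (B \ {b₀})` is an `S`-stable basis of `A` over `F`. -/
theorem stmt4 {S F A : Type*} [CommRing S] [IsDomain S] [Field F] [Ring A]
    [Algebra S F] [IsFractionRing S F] [Algebra F A] [Algebra S A] [IsScalarTower S F A]
    (B : Set A) (hB : IsStableBasis S F B)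
    (x₀ : A) (hx₀ : x₀ ≠ 0) (hx₀B : x₀ ∉ B) :
    ∃ b₀ ∈ B, IsStableBasis S F (insert x₀ (B \ {b₀})) := by
  classical
  obtain ⟨⟨hli, hspan⟩, C, hC, hstab⟩ := hB
  let 𝒷 : Module.Basis B F A := Module.Basis.mk hli (by rw [Subtype.range_coe]; exact hspan.ge)
  have h𝒷 : ∀ i : B, 𝒷 i = (i : A) := fun i => Module.Basis.mk_apply _ _ i
  set c := 𝒷.repr x₀ with hcdef
  have hcne : c ≠ 0 := fun h => hx₀ (by
    have := 𝒷.repr.injective (a₁ := x₀) (a₂ := 0) (by rw [map_zero, ← hcdef, h])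
    exact this)
  obtain ⟨i₀, hi₀⟩ : ∃ i, c i ≠ 0 := by
    by_contra h
    push_neg at h
    exact hcne (Finsupp.ext fun i => h i)
  set D : Set A := B \ {(i₀ : A)} with hDdef
  -- vanishing of the i₀-coordinate on the span of D
  have hcoord : ∀ y ∈ Submodule.span F D, 𝒷.repr y i₀ = 0 := by
    intro y hy
    have hle : Submodule.span F D ≤ LinearMap.ker (𝒷.coord i₀) := by
      rw [Submodule.span_le]
      rintro b ⟨hbB, hbne⟩
      simp only [SetLike.mem_coe, LinearMap.mem_ker, Module.Basis.coord_apply]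
      have hb' : 𝒷 ⟨b, hbB⟩ = b := h𝒷 _
      rw [← hb', Module.Basis.repr_self, Finsupp.single_apply, if_neg]
      intro h
      exact hbne (by simp [← h])
    have := hle hy
    rw [LinearMap.mem_ker, Module.Basis.coord_apply] at this
    exact this
  -- anything with vanishing i₀-coordinate lies in the span of D
  have hmem : ∀ y : A, 𝒷.repr y i₀ = 0 → y ∈ Submodule.span F D := by
    intro y hy
    have hrep := 𝒷.linearCombination_repr y
    rw [Finsupp.linearCombination_apply, Finsupp.sum] at hrep
    rw [← hrep]
    refine Submodule.sum_mem _ fun i hi => Submodule.smul_mem _ _ (Submodule.subset_span ?_)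
    rw [h𝒷]
    refine ⟨i.2, fun h => ?_⟩
    have hii : i = i₀ := Subtype.ext h
    exact (Finsupp.mem_support_iff.1 hi) (hii ▸ hy)
  have hx₀span : x₀ ∉ Submodule.span F D := fun h => hi₀ (hcoord x₀ h)
  have hx₀D : x₀ ∉ D := fun h => hx₀B h.1
  -- the new set is linearly independent
  have hliB' : LinearIndependent F ((↑) : ↥(insert x₀ D) → A) :=
    (linearIndepOn_id_insert hx₀D).2 ⟨LinearIndepOn.mono hli Set.diff_subset, hx₀span⟩
  -- the new set spans
  have hb₀mem : (i₀ : A) ∈ Submodule.span F (insert x₀ D) := by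
    have hz : x₀ - c i₀ • (i₀ : A) ∈ Submodule.span F D := by
      apply hmem
      have hsing : 𝒷.repr ((i₀ : A)) = Finsupp.single i₀ 1 := by
        rw [← h𝒷 i₀, Module.Basis.repr_self]
      rw [map_sub, map_smul, hsing]
      simp [hcdef]
    have heq : (c i₀)⁻¹ • (x₀ - (x₀ - c i₀ • (i₀ : A))) = (i₀ : A) := by
      rw [sub_sub_cancel, smul_smul, inv_mul_cancel₀ hi₀, one_smul]
    rw [← heq]
    exact Submodule.smul_mem _ _ (Submodule.sub_mem _
      (Submodule.subset_span (Set.mem_insert _ _))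
      ((Submodule.span_mono (Set.subset_insert _ _)) hz))
  have hspanB' : Submodule.span F (insert x₀ D) = ⊤ := by
    rw [eq_top_iff, ← hspan, Submodule.span_le]
    intro b hb
    by_cases hbe : b = (i₀ : A)
    · exact hbe ▸ hb₀mem
    · exact Submodule.subset_span (Set.mem_insert_of_mem _ ⟨hb, hbe⟩)
  -- clear denominators
  obtain ⟨d, hd⟩ := IsLocalization.exist_integer_multiples (nonZeroDivisors S) c.support c
  have hds : ∀ i : B, ∃ s : S, algebraMap S F s = (d : S) • c i := by
    intro i
    by_cases hi : i ∈ c.support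
    · obtain ⟨y, hy⟩ := hd i hi
      exact ⟨y, hy⟩
    · exact ⟨0, by simp [Finsupp.notMem_support_iff.1 hi]⟩
  choose t ht using hds
  have hx₀rep : (d : S) • x₀ = ∑ i ∈ c.support, t i • (i : A) := by
    have hrep := 𝒷.linearCombination_repr x₀
    rw [Finsupp.linearCombination_apply, Finsupp.sum] at hrep
    rw [← hrep, Finset.smul_sum]
    refine Finset.sum_congr rfl fun i _ => ?_
    rw [h𝒷, ← smul_assoc, ← ht i, algebraMap_smul]
  have hdF : algebraMap S F (d : S) ≠ 0 :=
    IsFractionRing.to_map_ne_zero_of_mem_nonZeroDivisors d.2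
  have ht₀F : algebraMap S F (t i₀) ≠ 0 := by
    rw [ht i₀, Algebra.smul_def]
    exact mul_ne_zero hdF hi₀
  have hu : algebraMap S F (t i₀ * (d : S)) ≠ 0 := by
    rw [map_mul]; exact mul_ne_zero ht₀F hdF
  have hi₀supp : i₀ ∈ c.support := Finsupp.mem_support_iff.2 hi₀
  -- key: t i₀ • b₀ lies in the S-span of the new set
  have hkey : t i₀ • (i₀ : A) ∈ Submodule.span S (insert x₀ D) := by
    have hsum : (d : S) • x₀ = t i₀ • (i₀ : A) + ∑ i ∈ c.support.erase i₀, t i • (i : A) := by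
      rw [hx₀rep, ← Finset.add_sum_erase _ _ hi₀supp]
    have heq : t i₀ • (i₀ : A)
        = (d : S) • x₀ - ∑ i ∈ c.support.erase i₀, t i • (i : A) := by
      rw [hsum]; abel
    rw [heq]
    refine Submodule.sub_mem _
      (Submodule.smul_mem _ _ (Submodule.subset_span (Set.mem_insert _ _)))
      (Submodule.sum_mem _ fun i hi => Submodule.smul_mem _ _
        (Submodule.subset_span (Set.mem_insert_of_mem _ ⟨i.2, fun h => ?_⟩)))
    exact (Finset.mem_erase.1 hi).1 (Subtype.ext h)
  -- multiplication by t i₀ carries span S B into span S (insert x₀ D)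
  have hsmul : ∀ z ∈ Submodule.span S B, t i₀ • z ∈ Submodule.span S (insert x₀ D) := by
    intro z hz
    induction hz using Submodule.span_induction with
    | mem b hb =>
      by_cases hbe : b = (i₀ : A)
      · exact hbe ▸ hkey
      · exact Submodule.smul_mem _ _ (Submodule.subset_span (Set.mem_insert_of_mem _ ⟨hb, hbe⟩))
    | zero => rw [smul_zero]; exact Submodule.zero_mem _
    | add x y _ _ hx hy => rw [smul_add]; exact Submodule.add_mem _ hx hy
    | smul a x _ hx =>
      rw [smul_smul, mul_comm, ← smul_smul]
      exact Submodule.smul_mem _ _ hx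
  -- the new stabilizing basis
  set u : F := algebraMap S F (t i₀ * (d : S)) with hudef
  set e : A ≃ₗ[F] A := LinearEquiv.smulOfNeZero F A u hu with hedef
  have he : ∀ a : A, e a = u • a := fun a => rfl
  refine ⟨(i₀ : A), i₀.2, ⟨hliB', hspanB'⟩, (fun a => u • a) '' C, ⟨?_, ?_⟩, ?_⟩
  · -- independence of the scaled basis
    have h1 : LinearIndependent F fun x : C => u • (x : A) := by
      have := hC.1.map' e.toLinearMap e.ker
      exact this
    exact LinearIndepOn.id_image (v := fun a => u • a) (s := C) h1
  · -- the scaled basis spans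
    have himg : (fun a => u • a) '' C = ⇑e '' C := rfl
    rw [himg, show ⇑e = ⇑e.toLinearMap from rfl, ← Submodule.map_span, hC.2,
      Submodule.map_top]
    exact LinearEquiv.range e
  · -- stability
    rintro c' ⟨ca, hca, rfl⟩ y hy
    have hscale : ∀ w : A, (u • ca) * w = t i₀ • ((d : S) • (ca * w)) := by
      intro w
      rw [smul_mul_assoc, hudef, algebraMap_smul, mul_smul]
    rcases hy with hy | hy
    · -- y = x₀
      subst hy
      rw [hscale]
      apply hsmul
      rw [← mul_smul_comm, hx₀rep, Finset.mul_sum]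
      refine Submodule.sum_mem _ fun i _ => ?_
      rw [mul_smul_comm]
      exact Submodule.smul_mem _ _ (hstab ca hca i i.2)
    · -- y ∈ D ⊆ B
      rw [hscale]
      exact hsmul _ (Submodule.smul_mem _ _ (hstab ca hca y hy.1))
end

section
/- Let B be an S-stable basis of the F-algebra A over F and let C ⊆ A be a finite linearly independent set. Then there exists a finite subset C_1 ⊆ B such that C ∪ (B \ C_1) is an S-stable basis of A over F containing C. -/
section Aux

variable {S F A : Type*} [CommRing S] [IsDomain S] [Field F] [Ring A]
    [Algebra S F] [IsFractionRing S F] [Algebra F A] [Algebra S A] [IsScalarTower S F A]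

/-- Clearing denominators for a single element. -/
theorem denom_single (W : Set A) {x : A} (hx : x ∈ Submodule.span F W) :
    ∃ s : S, s ≠ 0 ∧ s • x ∈ Submodule.span S W := by
  induction hx using Submodule.span_induction with
  | mem w hw => exact ⟨1, one_ne_zero, by simpa using Submodule.subset_span hw⟩
  | zero => exact ⟨1, one_ne_zero, by simp⟩
  | add x y _ _ hx hy =>
      obtain ⟨s, hs, hsx⟩ := hx
      obtain ⟨t, ht, hty⟩ := hy
      refine ⟨s * t, mul_ne_zero hs ht, ?_⟩
      have h1 : (s * t) • x = t • (s • x) := by rw [mul_comm, mul_smul]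
      have h2 : (s * t) • y = s • (t • y) := by rw [mul_smul]
      rw [smul_add, h1, h2]
      exact Submodule.add_mem _ (Submodule.smul_mem _ _ hsx) (Submodule.smul_mem _ _ hty)
  | smul f x _ hx =>
      obtain ⟨s, hs, hsx⟩ := hx
      obtain ⟨⟨n, d⟩, rfl⟩ := IsLocalization.mk'_surjective (nonZeroDivisors S) f
      refine ⟨(d : S) * s, mul_ne_zero (nonZeroDivisors.ne_zero d.2) hs, ?_⟩
      have hd0 : algebraMap S F (d : S) ≠ 0 := by
        simpa using (IsFractionRing.injective S F).ne (nonZeroDivisors.ne_zero d.2)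
      have key : ((d : S) * s) • (IsLocalization.mk' F n d • x) = n • (s • x) := by
        rw [← algebraMap_smul F ((d : S) * s), ← algebraMap_smul F s x,
          ← algebraMap_smul F n, smul_smul, smul_smul, IsFractionRing.mk'_eq_div, map_mul]
        congr 1
        field_simp
      rw [key]
      exact Submodule.smul_mem _ _ hsx

/-- Clearing denominators for a finite set of elements. -/
theorem denom_finite (W : Set A) {V : Set A} (hVfin : V.Finite)
    (hV : ∀ v ∈ V, v ∈ Submodule.span F W) :
    ∃ s : S, s ≠ 0 ∧ ∀ v ∈ V, s • v ∈ Submodule.span S W := by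
  revert hV
  refine Set.Finite.induction_on (motive := fun V _ => (∀ v ∈ V, v ∈ Submodule.span F W) →
    ∃ s : S, s ≠ 0 ∧ ∀ v ∈ V, s • v ∈ Submodule.span S W) V hVfin (fun _ => ⟨1, one_ne_zero, by simp⟩) ?_
  rintro a V haV hVf ih hV
  obtain ⟨s, hs, hsV⟩ := ih fun v hv => hV v (Set.mem_insert_of_mem a hv)
  obtain ⟨t, ht, hta⟩ := denom_single (S := S) W (hV a (Set.mem_insert a V))
  refine ⟨s * t, mul_ne_zero hs ht, ?_⟩
  rintro v (rfl | hv)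
  · rw [mul_smul]
    exact Submodule.smul_mem _ _ hta
  · rw [mul_comm, mul_smul]
    exact Submodule.smul_mem _ _ (hsV v hv)

theorem map_span_le {W W' : Set A} (f : A →ₗ[S] A) (hf : ∀ w ∈ W, f w ∈ Submodule.span S W')
    {y : A} (hy : y ∈ Submodule.span S W) : f y ∈ Submodule.span S W' := by
  have : Submodule.map f (Submodule.span S W) ≤ Submodule.span S W' := by
    rw [Submodule.map_span, Submodule.span_le]
    rintro _ ⟨w, hw, rfl⟩
    exact hf w hw
  exact this ⟨y, hy, rfl⟩

end Aux

/-- If `B` is an `S`-stable basis of `A` over `F` and `C ⊆ A` is a finite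
linearly independent set, then there is a finite subset `C₁ ⊆ B` such that
`C ∪ (B \ C₁)` is an `S`-stable basis of `A` over `F` (which contains `C`). -/
theorem stmt5 {S F A : Type*} [CommRing S] [IsDomain S] [Field F] [Ring A]
    [Algebra S F] [IsFractionRing S F] [Algebra F A] [Algebra S A] [IsScalarTower S F A]
    (B : Set A) (hB : IsStableBasis S F B)
    (C : Set A) (hCfin : C.Finite) (hCli : LinearIndependent F ((↑) : C → A)) :
    ∃ C₁ ⊆ B, C₁.Finite ∧ IsStableBasis S F (C ∪ (B \ C₁)) ∧ C ⊆ C ∪ (B \ C₁) := by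
  obtain ⟨⟨hBli, hBsp⟩, D, hDb, hD⟩ := hB
  -- The basis `B` as a `Basis`.
  let bB : Module.Basis B F A := Module.Basis.mk hBli (by rw [Subtype.range_coe]; rw [hBsp])
  have hbB : ∀ x : B, bB x = (x : A) := fun x => Module.Basis.mk_apply _ _ _
  -- `B₀` collects the supports of the elements of `C` w.r.t. `bB`.
  set B₀ : Set A := ⋃ c ∈ C, ((↑) '' ((bB.repr c).support : Set B)) with hB₀def
  have hB₀fin : B₀.Finite :=
    hCfin.biUnion fun c _ => ((bB.repr c).support.finite_toSet).image _
  have hB₀B : B₀ ⊆ B := by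
    rintro x hx
    simp only [hB₀def, Set.mem_iUnion] at hx
    obtain ⟨c, _, y, -, rfl⟩ := hx
    exact y.2
  have hCB₀ : ∀ c ∈ C, c ∈ Submodule.span F B₀ := by
    intro c hc
    have h1 : c ∈ Submodule.span F (bB '' ((bB.repr c).support : Set B)) :=
      bB.mem_span_repr_support c
    have h2 : (bB '' ((bB.repr c).support : Set B)) ⊆ B₀ := by
      rintro _ ⟨y, hy, rfl⟩
      rw [hbB]
      exact Set.mem_biUnion hc ⟨y, hy, rfl⟩
    exact Submodule.span_mono h2 h1
  -- Extend `C` to a basis `T` inside `C ∪ B`.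
  replace hCli : LinearIndepOn F id C := hCli
  set T : Set A := hCli.extend (Set.subset_union_left : C ⊆ C ∪ B) with hTdef
  have hCT : C ⊆ T := hCli.subset_extend _
  have hTsub : T ⊆ C ∪ B := hCli.extend_subset _
  have hTli : LinearIndependent F ((↑) : T → A) := hCli.linearIndepOn_extend _
  have hTsp : Submodule.span F T = ⊤ := by
    refine top_unique ?_
    rw [← hBsp]
    exact le_trans (Submodule.span_mono Set.subset_union_right)
      (Submodule.span_le.2 (hCli.subset_span_extend _))
  -- The removed part `C₁ = B \ T` is contained in `B₀`, hence finite.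
  have hC₁B₀ : B \ T ⊆ B₀ := by
    intro b hb
    by_contra hbB₀
    have hbspan : b ∈ Submodule.span F T := hTsp ▸ Submodule.mem_top
    have hle : Submodule.span F T ≤ Submodule.span F (B \ {b}) := by
      refine Submodule.span_le.2 fun x hx => ?_
      rcases hTsub hx with hxC | hxB
      · refine Submodule.span_mono ?_ (hCB₀ x hxC)
        intro y hy
        exact ⟨hB₀B hy, fun h => hbB₀ (h ▸ hy)⟩
      · exact Submodule.subset_span ⟨hxB, fun h => hb.2 (h ▸ hx)⟩
    have hbmem : b ∈ Submodule.span F (B \ {b}) := hle hbspan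
    have himg : ((↑) : B → A) '' {y : B | (y : A) ≠ b} = B \ {b} := by
      ext x
      constructor
      · rintro ⟨y, hy, rfl⟩; exact ⟨y.2, hy⟩
      · rintro ⟨hxB, hxb⟩; exact ⟨⟨x, hxB⟩, hxb, rfl⟩
    have := hBli.notMem_span_image (s := {y : B | (y : A) ≠ b}) (x := ⟨b, hb.1⟩)
      (by simp)
    rw [himg] at this
    exact this hbmem
  have hC₁fin : (B \ T).Finite := hB₀fin.subset hC₁B₀
  -- The new basis set equals `T`.
  have hTeq : C ∪ (B \ (B \ T)) = T := by
    ext x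
    constructor
    · rintro (hx | ⟨hxB, hx⟩)
      · exact hCT hx
      · by_contra hxT
        exact hx ⟨hxB, hxT⟩
    · intro hx
      rcases hTsub hx with hxC | hxB
      · exact Or.inl hxC
      · exact Or.inr ⟨hxB, fun h => h.2 hx⟩
  refine ⟨B \ T, Set.diff_subset, hC₁fin, ?_, Set.subset_union_left⟩
  rw [hTeq]
  refine ⟨⟨hTli, hTsp⟩, ?_⟩
  -- Stability: clear denominators.
  obtain ⟨u, hu0, hu⟩ := denom_finite (S := S) B hCfin
    (fun v _ => hBsp ▸ Submodule.mem_top)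
  obtain ⟨t, ht0, ht⟩ := denom_finite (S := S) T hC₁fin
    (fun v _ => hTsp ▸ Submodule.mem_top)
  -- Multiplication by elements of `D` preserves `span S B`.
  have hmulB : ∀ d ∈ D, ∀ y ∈ Submodule.span S B, d * y ∈ Submodule.span S B := by
    intro d hd y hy
    exact map_span_le (LinearMap.mulLeft S d) (fun w hw => hD d hd w hw) hy
  -- Scaling by `t` maps `span S B` into `span S T`.
  have hBtoT : ∀ y ∈ Submodule.span S B, t • y ∈ Submodule.span S T := by
    intro y hy
    refine map_span_le (t • (LinearMap.id : A →ₗ[S] A)) (fun w hw => ?_) hy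
    by_cases hwT : w ∈ T
    · exact Submodule.smul_mem _ _ (Submodule.subset_span hwT)
    · exact ht w ⟨hw, hwT⟩
  -- The scaled stabilizing basis.
  set f : F := algebraMap S F (t * u) with hfdef
  have hf0 : f ≠ 0 := by
    simpa [hfdef] using (IsFractionRing.injective S F).ne (mul_ne_zero ht0 hu0)
  set m : A →ₗ[F] A := f • (LinearMap.id : A →ₗ[F] A) with hmdef
  have hm : ∀ a : A, m a = f • a := fun a => rfl
  have hminj : Function.Injective m := by
    intro a b hab
    have : f • a = f • b := hab
    exact smul_right_injective A hf0 this
  refine ⟨m '' D, ⟨?_, ?_⟩, ?_⟩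
  · -- linear independence of `m '' D`
    have h1 : LinearIndependent F (⇑m ∘ ((↑) : D → A)) :=
      hDb.1.map' m (LinearMap.ker_eq_bot.2 hminj)
    exact LinearIndepOn.id_image (v := m) (s := D) h1
  · -- spanning
    rw [Submodule.span_image, hDb.2, Submodule.map_top, LinearMap.range_eq_top.2]
    intro x
    exact ⟨f⁻¹ • x, by rw [hm, smul_smul, mul_inv_cancel₀ hf0, one_smul]⟩
  · -- stability
    rintro _ ⟨d, hd, rfl⟩ x hx
    rw [hm, smul_mul_assoc, hfdef, algebraMap_smul]
    rw [← hTeq] at hx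
    rcases hx with hxC | hxB
    · have h1 : u • (d * x) ∈ Submodule.span S B := by
        have := hmulB d hd (u • x) (hu x hxC)
        rwa [mul_smul_comm] at this
      have h2 := hBtoT _ h1
      rwa [← mul_smul] at h2
    · have h1 : d * x ∈ Submodule.span S B := hD d hd x hxB.1
      have h2 := hBtoT _ h1
      have h3 := Submodule.smul_mem (Submodule.span S T) u h2
      rwa [← mul_smul, mul_comm u t] at h3
end

section
/- Let B be any basis of the F-algebra A over F, let M = Σ_{b∈B} Sb, and let R = {x ∈ A : xM ⊆ M}. Then R is an S-subalgebra of A with R ∩ F = S. -/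
/-- Let `B` be any basis of the `F`-algebra `A` over `F`, `M = Σ_{b∈B} S b`
and `R = {x ∈ A | xM ⊆ M}`. Then `R` is an `S`-subalgebra of `A` with `R ∩ F = S`. -/
theorem stmt6 {S F A : Type*} [CommRing S] [IsDomain S] [Field F] [Ring A] [Nontrivial A]
    [Algebra S F] [IsFractionRing S F] [Algebra F A] [Algebra S A] [IsScalarTower S F A]
    (hS : ¬ IsField S)
    (B : Set A) (hBli : LinearIndependent F ((↑) : B → A))
    (hBsp : Submodule.span F B = ⊤) :
    ∃ R : Subalgebra S A,
      (R : Set A) = {x : A | ∀ m ∈ Submodule.span S B, x * m ∈ Submodule.span S B} ∧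
      (∀ x : F, algebraMap F A x ∈ R ↔ ∃ s : S, algebraMap S F s = x) := by
  classical
  refine ⟨{
    carrier := {x : A | ∀ m ∈ Submodule.span S B, x * m ∈ Submodule.span S B}
    mul_mem' := ?_
    one_mem' := ?_
    add_mem' := ?_
    zero_mem' := ?_
    algebraMap_mem' := ?_ }, rfl, ?_⟩
  · intro a b ha hb m hm
    rw [mul_assoc]
    exact ha _ (hb _ hm)
  · intro m hm; simpa using hm
  · intro a b ha hb m hm
    rw [add_mul]
    exact Submodule.add_mem _ (ha _ hm) (hb _ hm)
  · intro m hm; simp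
  · intro s m hm
    rw [← Algebra.smul_def]
    exact Submodule.smul_mem _ s hm
  · intro x
    constructor
    · intro hx
      obtain ⟨b, hb⟩ : B.Nonempty := by
        rcases Set.eq_empty_or_nonempty B with h | h
        · rw [h, Submodule.span_empty] at hBsp
          exact absurd hBsp bot_ne_top
        · exact h
      have hxb : x • b ∈ Submodule.span S B := by
        rw [Algebra.smul_def]
        exact hx b (Submodule.subset_span hb)
      obtain ⟨c, hcs, hcsum⟩ := Submodule.mem_span_set.mp hxb
      set l : A →₀ F := Finsupp.single b x - c.mapRange (algebraMap S F) (map_zero _) with hl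
      have hlsupp : l ∈ Finsupp.supported F F B := by
        intro a ha
        have := Finsupp.support_sub (f := Finsupp.single b x)
          (g := c.mapRange (algebraMap S F) (map_zero _)) ha
        rcases Finset.mem_union.mp this with h | h
        · have := Finsupp.support_single_subset h
          simp only [Finset.mem_singleton] at this
          exact this ▸ hb
        · exact hcs (Finsupp.support_mapRange h)
      have hlzero : Finsupp.linearCombination F id l = 0 := by
        rw [hl, map_sub]
        rw [Finsupp.linearCombination_apply, Finsupp.linearCombination_apply]
        rw [Finsupp.sum_single_index (by simp)]
        rw [Finsupp.sum_mapRange_index (by simp)]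
        have : (c.sum fun a s => (algebraMap S F s) • (id a : A)) =
            c.sum fun a s => s • a := by
          apply Finsupp.sum_congr
          intro a _
          rw [algebraMap_smul]
          rfl
        rw [this, hcsum]
        simp
      have := linearIndepOn_iff.mp (linearIndependent_subtype_iff.mp hBli) l hlsupp hlzero
      refine ⟨c b, ?_⟩
      have hb0 : l b = 0 := by rw [this]; rfl
      rw [hl] at hb0
      simp only [Finsupp.sub_apply, Finsupp.single_eq_same, Finsupp.mapRange_apply] at hb0
      exact (sub_eq_zero.mp hb0).symm
    · rintro ⟨s, rfl⟩
      intro m hm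
      rw [← IsScalarTower.algebraMap_apply, ← Algebra.smul_def]
      exact Submodule.smul_mem _ s hm
end

section
/- Let B be an S-stable basis of the F-algebra A over F, M = Σ_{b∈B} Sb, and R = {x ∈ A : xM ⊆ M}. Then R is an S-nice subalgebra of A, i.e., R ∩ F = S and RF = A. -/
/-- If `B` is an `S`-stable basis of `A` over `F`, `M = Σ_{b∈B} S b` and
`R = {x ∈ A | xM ⊆ M}`, then `R` is an `S`-nice subalgebra of `A`: `R ∩ F = S` and
`RF = A` (the `F`-span of `R` is `A`). -/
theorem stmt9 {S F A : Type*} [CommRing S] [IsDomain S] [Field F] [Ring A] [Nontrivial A]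
    [Algebra S F] [IsFractionRing S F] [Algebra F A] [Algebra S A] [IsScalarTower S F A]
    (hS : ¬ IsField S)
    (B : Set A) (hB : IsStableBasis S F B) :
    ∃ R : Subalgebra S A,
      (R : Set A) = {x : A | ∀ m ∈ Submodule.span S B, x * m ∈ Submodule.span S B} ∧
      (∀ x : F, algebraMap F A x ∈ R ↔ ∃ s : S, algebraMap S F s = x) ∧
      Submodule.span F (R : Set A) = ⊤ := by
  classical
  obtain ⟨⟨hind, hspan⟩, C, ⟨hCind, hCspan⟩, hC⟩ := hB
  set M : Submodule S A := Submodule.span S B with hM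
  let R : Subalgebra S A :=
  { carrier := {x : A | ∀ m ∈ M, x * m ∈ M}
    mul_mem' := fun {a b} ha hb m hm => by
      rw [mul_assoc]; exact ha _ (hb _ hm)
    one_mem' := fun m hm => by simpa using hm
    add_mem' := fun {a b} ha hb m hm => by
      rw [add_mul]; exact M.add_mem (ha _ hm) (hb _ hm)
    zero_mem' := fun m hm => by simpa using M.zero_mem
    algebraMap_mem' := fun s m hm => by
      rw [← Algebra.smul_def]; exact M.smul_mem s hm }
  have hspan' : ⊤ ≤ Submodule.span F (Set.range ((↑) : B → A)) := by
    rw [Subtype.range_coe]; exact hspan.ge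
  let bas : Module.Basis B F A := Module.Basis.mk hind hspan'
  have hbas_repr : ∀ b : A, ∀ hb : b ∈ B, bas.repr b = Finsupp.single ⟨b, hb⟩ 1 := by
    intro b hb
    have : b = bas ⟨b, hb⟩ := (Module.Basis.mk_apply hind hspan' ⟨b, hb⟩).symm
    conv_lhs => rw [this]
    exact bas.repr_self _
  have key : ∀ m ∈ M, ∀ i : B, ∃ s : S, algebraMap S F s = bas.repr m i := by
    intro m hm
    induction hm using Submodule.span_induction with
    | mem b hb =>
        intro i
        rw [hbas_repr b hb, Finsupp.single_apply]
        split
        · exact ⟨1, map_one _⟩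
        · exact ⟨0, map_zero _⟩
    | zero => intro i; exact ⟨0, by simp⟩
    | add x y _ _ hx hy =>
        intro i
        obtain ⟨s, hs⟩ := hx i; obtain ⟨t, ht⟩ := hy i
        exact ⟨s + t, by simp [map_add, hs, ht]⟩
    | smul s x _ hx =>
        intro i
        obtain ⟨t, ht⟩ := hx i
        refine ⟨s * t, ?_⟩
        have : (s : S) • x = (algebraMap S F s) • x := (algebraMap_smul F s x).symm
        rw [this, map_smul, Finsupp.smul_apply, smul_eq_mul, map_mul, ht]
  have hBne : B.Nonempty := by
    rcases B.eq_empty_or_nonempty with h | h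
    · exfalso
      rw [h, Submodule.span_empty] at hspan
      exact absurd hspan bot_ne_top
    · exact h
  refine ⟨R, rfl, ?_, ?_⟩
  · intro x
    constructor
    · intro hx
      obtain ⟨b, hb⟩ := hBne
      have hmem : algebraMap F A x * b ∈ M := hx b (Submodule.subset_span hb)
      rw [← Algebra.smul_def] at hmem
      obtain ⟨s, hs⟩ := key _ hmem ⟨b, hb⟩
      refine ⟨s, ?_⟩
      rw [hs, map_smul, Finsupp.smul_apply, hbas_repr b hb, Finsupp.single_apply]
      simp
    · rintro ⟨s, rfl⟩
      intro m hm
      rw [← IsScalarTower.algebraMap_apply S F A, ← Algebra.smul_def]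
      exact M.smul_mem s hm
  · have hCR : C ⊆ (R : Set A) := by
      intro c hc m hm
      induction hm using Submodule.span_induction with
      | mem b hb => exact hC c hc b hb
      | zero => simpa using M.zero_mem
      | add x y _ _ hx hy => rw [mul_add]; exact M.add_mem hx hy
      | smul s x _ hx => rw [mul_smul_comm]; exact M.smul_mem s hx
    rw [eq_top_iff, ← hCspan]
    exact Submodule.span_mono hCR
end

section
/- If the F-algebra A has an S-stable basis over F, then there exists an S-nice subalgebra of A (an S-subalgebra R with R ∩ F = S and RF = A). -/
/-- The left-multiplication stabilizer of a submodule, as a subalgebra. -/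
def stabAlg (S : Type*) {A : Type*} [CommRing S] [Ring A] [Algebra S A]
    (M : Submodule S A) : Subalgebra S A where
  carrier := {a | ∀ m ∈ M, a * m ∈ M}
  mul_mem' := fun {a b} ha hb m hm => by
    rw [mul_assoc]; exact ha _ (hb m hm)
  one_mem' := fun m hm => by simpa using hm
  add_mem' := fun {a b} ha hb m hm => by
    rw [add_mul]; exact M.add_mem (ha m hm) (hb m hm)
  zero_mem' := fun m hm => by simpa using M.zero_mem
  algebraMap_mem' := fun s m hm => by
    rw [← Algebra.smul_def]
    exact M.smul_mem s hm

theorem mem_stabAlg {S : Type*} {A : Type*} [CommRing S] [Ring A] [Algebra S A]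
    {M : Submodule S A} {a : A} : a ∈ stabAlg S M ↔ ∀ m ∈ M, a * m ∈ M := Iff.rfl

/-- If the `F`-algebra `A` has an `S`-stable basis over `F`, then there
exists an `S`-nice subalgebra of `A`: an `S`-subalgebra `R` with `R ∩ F = S` and `RF = A`. -/
theorem stmt10 {S F A : Type*} [CommRing S] [IsDomain S] [Field F] [Ring A] [Nontrivial A]
    [Algebra S F] [IsFractionRing S F] [Algebra F A] [Algebra S A] [IsScalarTower S F A]
    (hS : ¬ IsField S)
    (hstable : ∃ B : Set A, IsStableBasis S F B) :
    ∃ R : Subalgebra S A,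
      (∀ x : F, algebraMap F A x ∈ R ↔ ∃ s : S, algebraMap S F s = x) ∧
      Submodule.span F (R : Set A) = ⊤ := by
  classical
  obtain ⟨B, ⟨hBli, hBspan⟩, C, ⟨hCli, hCspan⟩, hmul⟩ := hstable
  set M : Submodule S A := Submodule.span S B with hM
  -- the stabilizer subalgebra
  refine ⟨stabAlg S M, ?_, ?_⟩
  · -- R ∩ F = S
    obtain ⟨bF, hbFcoe⟩ : ∃ bF : Module.Basis B F A, ∀ i : B, bF i = (i : A) :=
      ⟨Module.Basis.mk hBli (by rw [Subtype.range_coe]; exact hBspan.ge),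
        fun i => Module.Basis.mk_apply _ _ _⟩
    intro x
    rw [mem_stabAlg]
    constructor
    · intro hx
      obtain ⟨i⟩ := bF.index_nonempty
      have hbM : (i : A) ∈ M := Submodule.subset_span i.2
      have hxb : x • (i : A) ∈ M := by
        rw [Algebra.smul_def]; exact hx _ hbM
      set φ : A →ₗ[F] F := bF.coord i with hφ
      have key : ∀ m ∈ M, ∃ s : S, algebraMap S F s = φ m := by
        intro m hm
        refine Submodule.span_induction (p := fun m _ => ∃ s : S, algebraMap S F s = φ m)
          ?_ ?_ ?_ ?_ hm
        · intro b hb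
          have : φ b = bF.repr (bF ⟨b, hb⟩) i := by
            rw [hbFcoe]; rfl
          rw [this, bF.repr_self_apply]
          by_cases h : (⟨b, hb⟩ : B) = i
          · rw [if_pos h]; exact ⟨1, map_one _⟩
          · rw [if_neg h]; exact ⟨0, map_zero _⟩
        · exact ⟨0, by simp⟩
        · rintro a b _ _ ⟨s, hs⟩ ⟨t, ht⟩
          exact ⟨s + t, by simp [hs, ht]⟩
        · rintro s a _ ⟨t, ht⟩
          refine ⟨s * t, ?_⟩
          rw [← algebraMap_smul F s a, map_smul, smul_eq_mul, ← ht, map_mul]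
      obtain ⟨s, hs⟩ := key _ hxb
      refine ⟨s, ?_⟩
      rw [hs, hφ, map_smul]
      have : bF.coord i (i : A) = 1 := by
        rw [← hbFcoe, Module.Basis.coord_apply, bF.repr_self_apply, if_pos rfl]
      rw [this, smul_eq_mul, mul_one]
    · rintro ⟨s, rfl⟩
      intro m hm
      rw [← IsScalarTower.algebraMap_apply, ← Algebra.smul_def]
      exact M.smul_mem s hm
  · -- spans A over F
    have hCR : ∀ c ∈ C, ∀ m ∈ M, c * m ∈ M := by
      intro c hc m hm
      refine Submodule.span_induction (p := fun m _ => c * m ∈ M) ?_ ?_ ?_ ?_ hm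
      · intro b hb; exact hmul c hc b hb
      · simp
      · intro a b _ _ ha hb; rw [mul_add]; exact M.add_mem ha hb
      · intro s a _ ha; rw [mul_smul_comm]; exact M.smul_mem s ha
    rw [eq_top_iff, ← hCspan]
    exact Submodule.span_le.mpr fun c hc => Submodule.subset_span (mem_stabAlg.mpr (hCR c hc))
end

section
/- Every finite-dimensional F-algebra A admits an S-nice subalgebra: an S-subalgebra R with R ∩ F = S and RF = A. -/
/-- Every finite-dimensional `F`-algebra `A` admits an `S`-nice subalgebra:
an `S`-subalgebra `R` with `R ∩ F = S` and `RF = A`. -/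
theorem stmt11 {S F A : Type*} [CommRing S] [IsDomain S] [Field F] [Ring A] [Nontrivial A]
    [Algebra S F] [IsFractionRing S F] [Algebra F A] [Algebra S A] [IsScalarTower S F A]
    [FiniteDimensional F A]
    (hS : ¬ IsField S) :
    ∃ R : Subalgebra S A,
      (∀ x : F, algebraMap F A x ∈ R ↔ ∃ s : S, algebraMap S F s = x) ∧
      Submodule.span F (R : Set A) = ⊤ := by
  classical
  have hli : LinearIndepOn F id ({1} : Set A) :=
    (linearIndepOn_singleton_iff F).mpr one_ne_zero
  let b : Module.Basis _ F A := Module.Basis.extend hli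
  haveI : Fintype (hli.extend (Set.subset_univ _)) := FiniteDimensional.fintypeBasisIndex b
  have h1mem : (1 : A) ∈ hli.extend (Set.subset_univ _) := hli.subset_extend _ rfl
  let i0 : hli.extend (Set.subset_univ _) := ⟨1, h1mem⟩
  have hb0 : b i0 = 1 := Module.Basis.extend_apply_self hli i0
  -- structure constants
  let c : _ × _ × _ → F := fun p => b.repr (b p.1 * b p.2.1) p.2.2
  obtain ⟨d, hd⟩ := IsLocalization.exist_integer_multiples_of_finite
    (nonZeroDivisors S) (S := F) c
  choose a ha using hd
  set d' : F := algebraMap S F (d : S) with hd'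
  have hd'0 : d' ≠ 0 := by
    simpa [hd'] using
      IsFractionRing.to_map_ne_zero_of_mem_nonZeroDivisors (A := S) d.2
  let f : _ → A := fun i => d' • b i
  let g : Option _ → A := fun o => o.elim 1 f
  set M : Submodule S A := Submodule.span S (Set.range g) with hM
  have hgmem : ∀ o, g o ∈ M := fun o => Submodule.subset_span ⟨o, rfl⟩
  have h1M : (1 : A) ∈ M := hgmem none
  have hfM : ∀ i, f i ∈ M := fun i => hgmem (some i)
  -- key multiplication formula
  have hmulf : ∀ i j, f i * f j = ∑ k, a (i, j, k) • f k := by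
    intro i j
    have hbij : b i * b j = ∑ k, c (i, j, k) • b k :=
      (b.sum_repr (b i * b j)).symm
    calc f i * f j = (d' • b i) * (d' • b j) := rfl
      _ = (d' * d') • (b i * b j) := by rw [smul_mul_smul_comm]
      _ = ∑ k, (d' * d') • (c (i, j, k) • b k) := by rw [hbij, Finset.smul_sum]
      _ = ∑ k, a (i, j, k) • f k := by
          refine Finset.sum_congr rfl fun k _ => ?_
          have h1 : a (i, j, k) • f k = ((d : S) • c (i, j, k)) • f k := by
            rw [← algebraMap_smul F (a (i, j, k)) (f k), ha (i, j, k)]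
          have h2 : ((d : S) • c (i, j, k)) = d' * c (i, j, k) := by
            rw [Algebra.smul_def, hd']
          rw [h1, h2]
          show (d' * d') • (c (i, j, k) • b k) = (d' * c (i, j, k)) • (d' • b k)
          rw [smul_smul, smul_smul]
          congr 1
          ring
  have hmul : ∀ x y : A, x ∈ M → y ∈ M → x * y ∈ M := by
    intro x y hx hy
    induction hx using Submodule.span_induction with
    | mem x hxg =>
      induction hy using Submodule.span_induction with
      | mem y hyg =>
        obtain ⟨o₁, rfl⟩ := hxg
        obtain ⟨o₂, rfl⟩ := hyg
        match o₁, o₂ with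
        | none, o₂ => simpa [g] using hgmem o₂
        | some i, none => simpa [g] using hgmem (some i)
        | some i, some j =>
          show f i * f j ∈ M
          rw [hmulf i j]
          exact Submodule.sum_mem _ fun k _ => Submodule.smul_mem _ _ (hfM k)
      | zero => simpa using M.zero_mem
      | add y z _ _ hy hz => rw [mul_add]; exact M.add_mem hy hz
      | smul s y _ hy => rw [mul_smul_comm]; exact M.smul_mem s hy
    | zero => simpa using M.zero_mem
    | add x z _ _ hx' hz' => rw [add_mul]; exact M.add_mem hx' hz'
    | smul s x _ hx' => rw [smul_mul_assoc]; exact M.smul_mem s hx'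
  refine ⟨M.toSubalgebra h1M hmul, fun x => ?_, ?_⟩
  · rw [Submodule.mem_toSubalgebra]
    constructor
    · intro hx
      rw [hM, Submodule.mem_span_range_iff_exists_fun] at hx
      obtain ⟨coef, hcoef⟩ := hx
      have key := congrArg (fun z => b.repr z i0) hcoef
      simp only [map_sum, Finset.sum_apply'] at key
      have hrepr : ∀ o, b.repr (coef o • g o) i0 =
          algebraMap S F (coef o) * b.repr (g o) i0 := by
        intro o
        rw [← algebraMap_smul F (coef o) (g o), map_smul]
        rfl
      have hgnone : b.repr (g none) i0 = 1 := by
        show b.repr (1 : A) i0 = 1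
        have h := b.repr_self i0
        rw [hb0] at h
        rw [h, Finsupp.single_apply]
        simp
      have hgsome : ∀ i, b.repr (g (some i)) i0 =
          d' * (if i = i0 then 1 else 0) := by
        intro i
        show b.repr (d' • b i) i0 = _
        rw [map_smul, b.repr_self]
        simp [Finsupp.single_apply]
      have hR : b.repr (algebraMap F A x) i0 = x := by
        rw [Algebra.algebraMap_eq_smul_one, map_smul, Finsupp.smul_apply]
        have h1' : b.repr (1 : A) i0 = 1 := hgnone
        rw [h1', smul_eq_mul, mul_one]
      rw [hR, Fintype.sum_option] at key
      simp only [hrepr, hgnone, hgsome] at key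
      refine ⟨coef none + coef (some i0) * d, ?_⟩
      rw [map_add, map_mul, ← hd', ← key]
      simp [mul_ite, mul_one, mul_zero, Finset.sum_ite_eq']
    · rintro ⟨t, rfl⟩
      have : algebraMap F A (algebraMap S F t) = t • (1 : A) := by
        rw [← IsScalarTower.algebraMap_apply, Algebra.algebraMap_eq_smul_one]
      rw [this]
      exact M.smul_mem t h1M
  · rw [eq_top_iff, ← b.span_eq, Submodule.span_le]
    rintro z ⟨i, rfl⟩
    have hfi : f i ∈ (↑(M.toSubalgebra h1M hmul) : Set A) := hfM i
    have : b i = d'⁻¹ • f i := by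
      show b i = d'⁻¹ • (d' • b i)
      rw [smul_smul, inv_mul_cancel₀ hd'0, one_smul]
    rw [this]
    exact Submodule.smul_mem _ _ (Submodule.subset_span hfi)
end

section
/- Let I be a proper two-sided ideal of the F-algebra A, and suppose there is a basis B_1 of I over F that is contained in some S-stable basis B of A over F. Then there exists an S-nice subalgebra R of A with I an ideal of R. -/
/-- Let `I` be a proper two-sided ideal of the `F`-algebra `A` (an
`F`-subspace closed under left and right multiplication by `A`) admitting an `F`-basis
`B₁` contained in some `S`-stable basis `B` of `A` over `F`. Then there is an `S`-nice
subalgebra `R` of `A` (`R ∩ F = S`, `RF = A`) containing `I` as a two-sided ideal. -/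
theorem stmt12 {S F A : Type*} [CommRing S] [IsDomain S] [Field F] [Ring A] [Nontrivial A]
    [Algebra S F] [IsFractionRing S F] [Algebra F A] [Algebra S A] [IsScalarTower S F A]
    (hS : ¬ IsField S)
    (I : Submodule F A) (hIideal : ∀ a ∈ I, ∀ x : A, x * a ∈ I ∧ a * x ∈ I) (hIne : I ≠ ⊤)
    (B₁ B : Set A) (hB₁B : B₁ ⊆ B)
    (hB₁li : LinearIndependent F ((↑) : B₁ → A)) (hB₁sp : Submodule.span F B₁ = I)
    (hB : IsStableBasis S F B) :
    ∃ R : Subalgebra S A,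
      (∀ x : F, algebraMap F A x ∈ R ↔ ∃ s : S, algebraMap S F s = x) ∧
      Submodule.span F (R : Set A) = ⊤ ∧
      (I : Set A) ⊆ (R : Set A) ∧
      (∀ r ∈ R, ∀ a ∈ I, r * a ∈ I ∧ a * r ∈ I) := by
  classical
  obtain ⟨⟨hBli, hBsp⟩, C, hCbasis, hCstab⟩ := hB
  set M : Submodule S A := Submodule.span S B with hM
  set N : Submodule S A := M ⊔ Submodule.restrictScalars S I with hN
  have hIN : ∀ a ∈ I, a ∈ N := fun a ha => Submodule.mem_sup_right ha
  have hMN : ∀ a ∈ M, a ∈ N := fun a ha => Submodule.mem_sup_left ha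
  have key : ∀ a : A, (∀ m ∈ M, a * m ∈ N) → ∀ n ∈ N, a * n ∈ N := by
    intro a ha n hn
    obtain ⟨m, hm, i, hi, rfl⟩ := Submodule.mem_sup.mp hn
    rw [mul_add]
    exact N.add_mem (ha m hm) (hIN _ (hIideal i hi a).1)
  set R : Subalgebra S A :=
  { carrier := {a | ∀ m ∈ M, a * m ∈ N}
    mul_mem' := fun {a b} ha hb m hm => by
      rw [mul_assoc]; exact key a ha _ (hb m hm)
    one_mem' := fun m hm => by simp only [one_mul]; exact hMN m hm
    add_mem' := fun {a b} ha hb m hm => by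
      rw [add_mul]; exact N.add_mem (ha m hm) (hb m hm)
    zero_mem' := fun m hm => by simp only [zero_mul]; exact N.zero_mem
    algebraMap_mem' := fun s m hm => by
      rw [← Algebra.smul_def]; exact hMN _ (M.smul_mem s hm) } with hRdef
  have hmemR : ∀ a : A, a ∈ R ↔ ∀ m ∈ M, a * m ∈ N := fun a => Iff.rfl
  -- the basis
  let bB : Module.Basis B F A := Module.Basis.mk hBli (by rw [Subtype.range_coe]; exact hBsp.ge)
  have hbB : ∀ b : B, bB b = (b : A) := fun b => Module.Basis.mk_apply _ _ _
  have hreprM : ∀ m ∈ M, ∀ b : B, bB.repr m b ∈ (algebraMap S F).range := by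
    intro m hm
    refine Submodule.span_induction (fun x hx b => ?_) (fun b => by simp)
      (fun x y hx hy px py b => by rw [map_add]; exact (RingHom.range _).add_mem (px b) (py b))
      (fun s x hx px b => ?_) hm
    · have hx' : (x : A) = bB ⟨x, hx⟩ := (hbB ⟨_, by assumption⟩).symm
      rw [hx', bB.repr_self, Finsupp.single_apply]
      split
      · exact ⟨1, map_one _⟩
      · exact ⟨0, map_zero _⟩
    · have : s • x = (algebraMap S F s) • x := (algebraMap_smul F s x).symm
      rw [this, map_smul, Finsupp.smul_apply, smul_eq_mul]
      exact (RingHom.range _).mul_mem ⟨s, rfl⟩ (px b)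
  have hreprI : ∀ i ∈ I, ∀ b : B, (b : A) ∉ B₁ → bB.repr i b = 0 := by
    intro i hi
    rw [← hB₁sp] at hi
    refine Submodule.span_induction (fun x hx b hb => ?_) (fun b hb => by simp)
      (fun x y hx hy px py b hb => by rw [map_add, Finsupp.add_apply, px b hb, py b hb, add_zero])
      (fun c x hx px b hb => by rw [map_smul, Finsupp.smul_apply, px b hb, smul_zero]) hi
    · have hx' : (x : A) = bB ⟨x, hB₁B hx⟩ := (hbB ⟨_, hB₁B hx⟩).symm
      rw [hx', bB.repr_self, Finsupp.single_apply]
      rw [if_neg]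
      intro h
      apply hb
      rw [← h]
      exact hx
  have hreprN : ∀ n ∈ N, ∀ b : B, (b : A) ∉ B₁ → bB.repr n b ∈ (algebraMap S F).range := by
    intro n hn b hb
    obtain ⟨m, hm, i, hi, rfl⟩ := Submodule.mem_sup.mp hn
    rw [map_add, Finsupp.add_apply, hreprI i hi b hb, add_zero]
    exact hreprM m hm b
  have hex : ∃ b ∈ B, b ∉ B₁ := by
    by_contra h
    push_neg at h
    apply hIne
    rw [← hB₁sp]
    have : (⊤ : Submodule F A) ≤ Submodule.span F B₁ := by
      rw [← hBsp]; exact Submodule.span_mono h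
    exact le_antisymm le_top (le_trans this (le_of_eq rfl)) |>.symm ▸ (top_le_iff.mp this).symm
  obtain ⟨b₀, hb₀B, hb₀⟩ := hex
  refine ⟨R, ?_, ?_, ?_, fun r _ a ha => hIideal a ha r⟩
  · intro x
    constructor
    · intro hx
      have hb₀M : b₀ ∈ M := Submodule.subset_span hb₀B
      have h1 : algebraMap F A x * b₀ ∈ N := hx b₀ hb₀M
      have h2 : algebraMap F A x * b₀ = x • b₀ := (Algebra.smul_def x b₀).symm
      have h4 : ∀ i : B, bB.repr (i : A) = Finsupp.single i 1 := fun i => by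
        rw [← hbB i, bB.repr_self]
      have h3 := hreprN _ h1 ⟨b₀, hb₀B⟩ hb₀
      have h5 : bB.repr b₀ = Finsupp.single ⟨b₀, hb₀B⟩ 1 := h4 ⟨b₀, hb₀B⟩
      rw [h2, map_smul, Finsupp.smul_apply, h5, Finsupp.single_eq_same, smul_eq_mul,
        mul_one] at h3
      exact h3
    · rintro ⟨s, rfl⟩
      rw [← IsScalarTower.algebraMap_apply]
      exact R.algebraMap_mem s
  · have hCR : C ⊆ (R : Set A) := by
      intro c hc
      show ∀ m ∈ M, c * m ∈ N
      intro m hm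
      refine hMN _ ?_
      refine Submodule.span_induction (fun b hb => hCstab c hc b hb)
        (by simp only [mul_zero]; exact M.zero_mem)
        (fun x y hx hy px py => by rw [mul_add]; exact M.add_mem px py)
        (fun s x hx px => by rw [mul_smul_comm]; exact M.smul_mem s px) hm
    have h1 : Submodule.span F C ≤ Submodule.span F (R : Set A) := Submodule.span_mono hCR
    rw [hCbasis.2] at h1
    exact top_le_iff.mp h1
  · intro a ha
    show ∀ m ∈ M, a * m ∈ N
    intro m hm
    exact hIN _ (hIideal a ha m).2
end

section
/- Suppose the F-algebra A ≠ F has an S-stable basis over F. Then for every S-nice subalgebra R of A there exists an S-nice subalgebra R' of A with R' strictly contained in R. Consequently there is an infinite strictly decreasing chain of S-nice subalgebras of A, and no minimal S-nice subalgebra exists. -/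
/-- `R` is an `S`-nice subalgebra of `A`: `R ∩ F = S` and `RF = A`. -/
def IsNice (S F : Type*) {A : Type*} [CommRing S] [Field F] [Ring A]
    [Algebra S F] [Algebra F A] [Algebra S A] [IsScalarTower S F A]
    (R : Subalgebra S A) : Prop :=
  (∀ x : F, algebraMap F A x ∈ R ↔ ∃ s : S, algebraMap S F s = x) ∧
    Submodule.span F (R : Set A) = ⊤


section Helpers

variable {S F A : Type*} [CommRing S] [IsDomain S] [Field F] [Ring A]
    [Algebra S F] [IsFractionRing S F] [Algebra F A] [Algebra S A] [IsScalarTower S F A]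

/-- the multiplier condition: `a` maps the `S`-span of `B` into itself by left multiplication. -/
private def Dp (S : Type*) {A : Type*} [CommRing S] [Ring A] [Algebra S A] (B : Set A)
    (a : A) : Prop :=
  ∀ m ∈ Submodule.span S B, a * m ∈ Submodule.span S B

private lemma Dp.zero (B : Set A) : Dp S B (0 : A) := by
  intro m hm; rw [zero_mul]; exact Submodule.zero_mem _

private lemma Dp.add {B : Set A} {x y : A} (hx : Dp S B x) (hy : Dp S B y) : Dp S B (x + y) := by
  intro m hm; rw [add_mul]; exact Submodule.add_mem _ (hx m hm) (hy m hm)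

private lemma Dp.smul {B : Set A} (c : S) {x : A} (hx : Dp S B x) : Dp S B (c • x) := by
  intro m hm; rw [smul_mul_assoc]; exact Submodule.smul_mem _ _ (hx m hm)

private lemma Dp.mul {B : Set A} {x y : A} (hx : Dp S B x) (hy : Dp S B y) : Dp S B (x * y) := by
  intro m hm; rw [mul_assoc]; exact hx _ (hy m hm)

/-- clearing denominators -/
private lemma denom_clear (T : Set A) {a : A} (ha : a ∈ Submodule.span F T) :
    ∃ d : S, d ≠ 0 ∧ d • a ∈ Submodule.span S T := by
  induction ha using Submodule.span_induction with
  | mem x hx => exact ⟨1, one_ne_zero, by simpa using Submodule.subset_span hx⟩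
  | zero => exact ⟨1, one_ne_zero, by simp⟩
  | add x y hx hy ihx ihy =>
      obtain ⟨d₁, hd₁, h₁⟩ := ihx
      obtain ⟨d₂, hd₂, h₂⟩ := ihy
      refine ⟨d₁ * d₂, mul_ne_zero hd₁ hd₂, ?_⟩
      rw [smul_add]
      refine Submodule.add_mem _ ?_ ?_
      · rw [mul_comm, mul_smul]; exact Submodule.smul_mem _ _ h₁
      · rw [mul_smul]; exact Submodule.smul_mem _ _ h₂
  | smul c x hx ih =>
      obtain ⟨d, hd, hmem⟩ := ih
      obtain ⟨⟨n, den⟩, hsurj⟩ := IsLocalization.surj (nonZeroDivisors S) c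
      refine ⟨(den : S) * d, mul_ne_zero (nonZeroDivisors.ne_zero den.2) hd, ?_⟩
      have h1 : ((den : S) * d) • (c • x) = (n * d) • x := by
        rw [← algebraMap_smul F ((den : S) * d) (c • x), ← algebraMap_smul F (n * d) x,
          smul_smul, map_mul, map_mul]
        congr 1
        rw [show algebraMap S F (den : S) * algebraMap S F d * c
            = (c * algebraMap S F (den : S)) * algebraMap S F d by ring, hsurj]
      rw [h1, mul_smul]
      exact Submodule.smul_mem _ _ hmem


/-- the new subalgebra `S + s • (R ∩ D)`. -/
private def Rnew (B : Set A) (s : S) (R : Subalgebra S A) : Subalgebra S A where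
  carrier := {x | ∃ (t : S) (e : A), e ∈ R ∧ Dp S B e ∧ x = algebraMap S A t + s • e}
  algebraMap_mem' := fun t => ⟨t, 0, R.zero_mem, Dp.zero B, by simp⟩
  one_mem' := ⟨1, 0, R.zero_mem, Dp.zero B, by simp⟩
  zero_mem' := ⟨0, 0, R.zero_mem, Dp.zero B, by simp⟩
  add_mem' := by
    rintro x y ⟨t, e, heR, heD, rfl⟩ ⟨t', f, hfR, hfD, rfl⟩
    exact ⟨t + t', e + f, R.add_mem heR hfR, heD.add hfD, by rw [map_add, smul_add]; abel⟩
  mul_mem' := by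
    rintro x y ⟨t, e, heR, heD, rfl⟩ ⟨t', f, hfR, hfD, rfl⟩
    refine ⟨t * t', t • f + t' • e + s • (e * f),
      R.add_mem (R.add_mem (R.smul_mem hfR t) (R.smul_mem heR t'))
        (R.smul_mem (R.mul_mem heR hfR) s),
      ((hfD.smul t).add (heD.smul t')).add ((heD.mul hfD).smul s), ?_⟩
    simp only [Algebra.smul_def, map_mul]
    have hcent : ∀ (c : S) (u v : A),
        u * (algebraMap S A c * v) = algebraMap S A c * (u * v) := by
      intro c u v; rw [← mul_assoc, ← Algebra.commutes c u, mul_assoc]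
    rw [add_mul, mul_add, mul_add, mul_add, mul_add]
    rw [hcent s (algebraMap S A t) f,
      mul_assoc (algebraMap S A s) e (algebraMap S A t'), ← Algebra.commutes t' e,
      mul_assoc (algebraMap S A s) e (algebraMap S A s * f), hcent s e f]
    abel

set_option maxHeartbeats 1000000 in
private lemma exists_lt_nice
    (hS : ¬ IsField S) (hA : ¬ Function.Surjective (algebraMap F A))
    (hstable : ∃ B : Set A, IsStableBasis S F B)
    (R : Subalgebra S A) (hR : IsNice S F R) :
    ∃ R' : Subalgebra S A, IsNice S F R' ∧ R' < R := by
  classical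
  obtain ⟨B, ⟨hBli, hBspan⟩, C, ⟨hCli, hCspan⟩, hmulCB⟩ := hstable
  -- dispatch the trivial ring case
  rcases subsingleton_or_nontrivial A with hsub | hnt
  · exact absurd (fun a => ⟨0, Subsingleton.elim _ _⟩) hA
  -- the basis
  let bs : Module.Basis ↥B F A := Module.Basis.mk hBli (by rw [Subtype.range_coe]; exact hBspan.ge)
  have bs_apply : ∀ i : ↥B, bs i = (i : A) := fun i => Module.Basis.mk_apply _ _ i
  have hSFinj : Function.Injective (algebraMap S F) := IsFractionRing.injective S F
  -- coordinates of elements of the S-span of B lie in S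
  have coordS : ∀ m ∈ Submodule.span S B, ∀ b' : ↥B,
      ∃ t : S, algebraMap S F t = bs.repr m b' := by
    intro m hm
    induction hm using Submodule.span_induction with
    | mem x hx =>
        intro b'
        have hx' := bs.repr_self (⟨x, hx⟩ : ↥B)
        rw [bs_apply] at hx'
        rw [hx', Finsupp.single_apply]
        by_cases h : (⟨x, hx⟩ : ↥B) = b'
        · rw [if_pos h]; exact ⟨1, map_one _⟩
        · rw [if_neg h]; exact ⟨0, map_zero _⟩
    | zero => intro b'; exact ⟨0, by simp⟩
    | add x y hx hy ihx ihy =>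
        intro b'
        obtain ⟨t, ht⟩ := ihx b'
        obtain ⟨u, hu⟩ := ihy b'
        exact ⟨t + u, by rw [map_add, map_add, Finsupp.add_apply, ht, hu]⟩
    | smul a x hx ih =>
        intro b'
        obtain ⟨t, ht⟩ := ih b'
        refine ⟨a * t, ?_⟩
        rw [map_mul, ht, ← algebraMap_smul F a x, map_smul, Finsupp.smul_apply, smul_eq_mul]
  -- the S-span of C consists of multipliers
  have hND : ∀ x ∈ Submodule.span S C, Dp S B x := by
    intro x hx
    have hcm : ∀ c ∈ C, Dp S B c := by
      intro c hc m hm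
      induction hm using Submodule.span_induction with
      | mem b hb => exact hmulCB c hc b hb
      | zero => rw [mul_zero]; exact Submodule.zero_mem _
      | add u v _ _ hu hv => rw [mul_add]; exact Submodule.add_mem _ hu hv
      | smul a u _ hu => rw [mul_smul_comm]; exact Submodule.smul_mem _ _ hu
    induction hx using Submodule.span_induction with
    | mem c hc => exact hcm c hc
    | zero => exact Dp.zero B
    | add u v _ _ hu hv => exact hu.add hv
    | smul a u _ hu => exact hu.smul a
  -- extend vanishing on R to vanishing on A
  have extA : ∀ (ψ : A →ₗ[F] F), (∀ r ∈ R, ψ r = 0) → ∀ a, ψ a = 0 := by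
    intro ψ h a
    have ha : a ∈ Submodule.span F (R : Set A) := hR.2 ▸ Submodule.mem_top
    induction ha using Submodule.span_induction with
    | mem u hu => exact h u hu
    | zero => exact map_zero ψ
    | add u v _ _ hu hv => rw [map_add, hu, hv, add_zero]
    | smul c u _ hu => rw [map_smul, hu, smul_zero]
  -- the coordinate functionals
  let L : ↥B → ↥B → (A →ₗ[F] F) := fun b b' =>
    { toFun := fun a => bs.repr (a * (b : A)) b'
      map_add' := fun x y => by rw [add_mul, map_add, Finsupp.add_apply]
      map_smul' := fun c x => by
        rw [smul_mul_assoc, map_smul, Finsupp.smul_apply, smul_eq_mul]; rfl }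
  have L_apply : ∀ (b b' : ↥B) (a : A), L b b' a = bs.repr (a * (b : A)) b' := fun _ _ _ => rfl
  -- the key functional
  have key : ∃ (ψ : A →ₗ[F] F) (r : A), r ∈ R ∧ ψ r ≠ 0 ∧ ψ 1 = 0 ∧
      ∀ e, Dp S B e → ∃ t : S, algebraMap S F t = ψ e := by
    by_cases hc : (∀ (b b' : ↥B), b ≠ b' → ∀ r ∈ R, L b b' r = 0) ∧
        (∀ (b b' : ↥B) (r : A), r ∈ R → L b b r = L b' b' r)
    · exfalso
      obtain ⟨hoff, hdiag⟩ := hc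
      have hoffA : ∀ (b b' : ↥B), b ≠ b' → ∀ a, L b b' a = 0 :=
        fun b b' hne => extA _ (hoff b b' hne)
      have hdiagA : ∀ (b b' : ↥B) (a : A), L b b a = L b' b' a := by
        intro b b' a
        have h0 := extA (L b b - L b' b')
          (fun r hr => by rw [LinearMap.sub_apply, hdiag b b' r hr, sub_self]) a
        rw [LinearMap.sub_apply, sub_eq_zero] at h0
        exact h0
      obtain ⟨b₀⟩ : Nonempty ↥B := bs.index_nonempty
      apply hA
      intro a
      refine ⟨bs.repr (a * (b₀ : A)) b₀, ?_⟩
      have hab : ∀ b : ↥B, a * (b : A) = bs.repr (a * (b₀ : A)) b₀ • (b : A) := by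
        intro b
        apply bs.repr.injective
        rw [map_smul, ← bs_apply b, bs.repr_self, bs_apply b]
        ext b''
        rw [Finsupp.smul_apply, Finsupp.single_apply]
        by_cases h : b = b''
        · subst h
          rw [if_pos rfl, smul_eq_mul, mul_one]
          have := hdiagA b b₀ a
          rw [L_apply, L_apply] at this
          exact this
        · rw [if_neg h, smul_eq_mul, mul_zero]
          have := hoffA b b'' (fun hh => h hh) a
          rw [L_apply] at this
          exact this
      have heq : LinearMap.mulLeft F a
          = (bs.repr (a * (b₀ : A)) b₀) • (LinearMap.id (R := F) (M := A)) := by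
        refine LinearMap.ext_on hBspan ?_
        intro x hx
        have := hab ⟨x, hx⟩
        simpa using this
      have h1 := congrArg (fun g => g 1) heq
      simp only [LinearMap.mulLeft_apply, mul_one, LinearMap.smul_apply, LinearMap.id_apply] at h1
      rw [Algebra.algebraMap_eq_smul_one]
      exact h1.symm
    · rw [not_and_or] at hc
      rcases hc with h1 | h2
      · push_neg at h1
        obtain ⟨b, b', hne, r, hrR, hr0⟩ := h1
        refine ⟨L b b', r, hrR, hr0, ?_, ?_⟩
        · rw [L_apply, one_mul, ← bs_apply b, bs.repr_self, Finsupp.single_apply, if_neg hne]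
        · intro e he
          exact coordS (e * (b : A)) (he (b : A) (Submodule.subset_span b.2)) b'
      · push_neg at h2
        obtain ⟨b, b', r, hrR, hne⟩ := h2
        refine ⟨L b b - L b' b', r, hrR, ?_, ?_, ?_⟩
        · rw [LinearMap.sub_apply, sub_ne_zero]; exact hne
        · rw [LinearMap.sub_apply, L_apply, L_apply, one_mul, one_mul,
            ← bs_apply b, ← bs_apply b', bs.repr_self, bs.repr_self,
            Finsupp.single_apply, Finsupp.single_apply, if_pos rfl, if_pos rfl, sub_self]
        · intro e he
          obtain ⟨t₁, ht₁⟩ := coordS (e * (b : A)) (he (b : A) (Submodule.subset_span b.2)) b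
          obtain ⟨t₂, ht₂⟩ := coordS (e * (b' : A)) (he (b' : A) (Submodule.subset_span b'.2)) b'
          exact ⟨t₁ - t₂, by rw [map_sub, ht₁, ht₂, LinearMap.sub_apply, L_apply, L_apply]⟩
  obtain ⟨ψ, r, hrR, hψr, hψ1, hψD⟩ := key
  -- a nonzero nonunit of S
  obtain ⟨s₀, hs₀0, hs₀u⟩ : ∃ s₀ : S, s₀ ≠ 0 ∧ ∀ u : S, s₀ * u ≠ 1 := by
    by_contra h
    push_neg at h
    exact hS ⟨exists_pair_ne S, mul_comm, fun {a} ha => h a ha⟩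
  -- choose s with ψ r ∉ sS
  obtain ⟨s, hs0, hsw⟩ : ∃ s : S, s ≠ 0 ∧ ∀ u : S, algebraMap S F (s * u) ≠ ψ r := by
    rcases em (∃ t : S, algebraMap S F t = ψ r) with ⟨t, ht⟩ | hnot
    · have ht0 : t ≠ 0 := by
        rintro rfl
        rw [map_zero] at ht
        exact hψr ht.symm
      refine ⟨t * s₀, mul_ne_zero ht0 hs₀0, ?_⟩
      intro u heq
      rw [← ht] at heq
      have : t * s₀ * u = t := hSFinj heq
      rw [mul_assoc] at this
      exact hs₀u u (mul_left_cancel₀ ht0 (this.trans (mul_one t).symm))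
    · exact ⟨s₀, hs₀0, fun u heq => hnot ⟨s₀ * u, heq⟩⟩
  have hsF : algebraMap S F s ≠ 0 := fun h => hs0 (hSFinj (h.trans (map_zero _).symm))
  refine ⟨Rnew B s R, ⟨?_, ?_⟩, ?_⟩
  · -- intersection with F is S
    intro x
    constructor
    · rintro ⟨t, e, heR, heD, hx⟩
      have h1 : algebraMap F A (x - algebraMap S F t) = algebraMap S F s • e := by
        rw [map_sub, ← IsScalarTower.algebraMap_apply S F A, hx, algebraMap_smul]
        abel
      have h2 : e = algebraMap F A ((algebraMap S F s)⁻¹ * (x - algebraMap S F t)) := by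
        rw [map_mul, ← Algebra.smul_def, h1, inv_smul_smul₀ hsF]
      obtain ⟨u, hu⟩ := (hR.1 _).mp (h2 ▸ heR)
      refine ⟨t + s * u, ?_⟩
      rw [map_add, map_mul, hu]
      field_simp
      ring
    · rintro ⟨t, rfl⟩
      exact ⟨t, 0, R.zero_mem, Dp.zero B, by
        rw [← IsScalarTower.algebraMap_apply S F A, smul_zero, add_zero]⟩
  · -- spans A over F
    rw [Submodule.eq_top_iff']
    intro a
    have haR : a ∈ Submodule.span F (R : Set A) := hR.2 ▸ Submodule.mem_top
    obtain ⟨d₁, hd₁, h₁⟩ := denom_clear (S := S) (R : Set A) haR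
    have h₁' : d₁ • a ∈ R := by
      have : Submodule.span S (R : Set A) ≤ R.toSubmodule :=
        Submodule.span_le.mpr (fun x hx => hx)
      exact this h₁
    obtain ⟨d₂, hd₂, h₂⟩ := denom_clear (S := S) C (hCspan ▸ Submodule.mem_top : a ∈ Submodule.span F C)
    have hmem : (s * (d₁ * d₂)) • a ∈ Rnew B s R := by
      refine ⟨0, (d₁ * d₂) • a, ?_, ?_, ?_⟩
      · rw [mul_comm d₁ d₂, mul_smul]
        exact R.smul_mem h₁' d₂
      · rw [mul_smul]
        exact (hND _ h₂).smul d₁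
      · rw [map_zero, zero_add, mul_smul]
    have hc0 : algebraMap S F (s * (d₁ * d₂)) ≠ 0 := fun h => by
      have : s * (d₁ * d₂) = 0 := hSFinj (h.trans (map_zero _).symm)
      exact (mul_ne_zero hs0 (mul_ne_zero hd₁ hd₂)) this
    have : a = (algebraMap S F (s * (d₁ * d₂)))⁻¹ • ((s * (d₁ * d₂)) • a) := by
      rw [← algebraMap_smul F (s * (d₁ * d₂)) a, inv_smul_smul₀ hc0]
    rw [this]
    exact Submodule.smul_mem _ _ (Submodule.subset_span hmem)
  · -- strictly smaller
    rw [SetLike.lt_iff_le_and_exists]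
    constructor
    · rintro x ⟨t, e, heR, heD, rfl⟩
      exact R.add_mem (R.algebraMap_mem t) (R.smul_mem heR s)
    · refine ⟨r, hrR, ?_⟩
      rintro ⟨t, e, heR, heD, hre⟩
      obtain ⟨u, hu⟩ := hψD e heD
      apply hsw u
      rw [map_mul, hu]
      have hψt : ψ (algebraMap S A t) = 0 := by
        rw [IsScalarTower.algebraMap_apply S F A, Algebra.algebraMap_eq_smul_one,
          map_smul, hψ1, smul_zero]
      have : ψ r = algebraMap S F s * ψ e := by
        rw [hre, map_add, hψt, zero_add, ← algebraMap_smul F s e, map_smul, smul_eq_mul]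
      rw [this]

end Helpers

/-- If `A ≠ F` has an `S`-stable basis over `F`, then below every `S`-nice
subalgebra `R` of `A` there is an infinite strictly decreasing chain of `S`-nice
subalgebras starting from `R`; in particular no minimal `S`-nice subalgebra exists. -/
theorem stmt15 {S F A : Type*} [CommRing S] [IsDomain S] [Field F] [Ring A]
    [Algebra S F] [IsFractionRing S F] [Algebra F A] [Algebra S A] [IsScalarTower S F A]
    (hS : ¬ IsField S) (hA : ¬ Function.Surjective (algebraMap F A))
    (hstable : ∃ B : Set A, IsStableBasis S F B)
    (R : Subalgebra S A) (hR : IsNice S F R) :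
    (∃ f : ℕ → Subalgebra S A, f 0 = R ∧ (∀ n, IsNice S F (f n)) ∧ ∀ n, f (n + 1) < f n) ∧
      ¬ ∃ R₀ : Subalgebra S A, IsNice S F R₀ ∧
          ∀ R' : Subalgebra S A, IsNice S F R' → ¬ R' < R₀ := by
  constructor
  · choose g hg1 hg2 using fun (p : {P : Subalgebra S A // IsNice S F P}) =>
      exists_lt_nice hS hA hstable p.1 p.2
    let f : ℕ → {P : Subalgebra S A // IsNice S F P} :=
      fun n => Nat.rec ⟨R, hR⟩ (fun _ p => ⟨g p, hg1 p⟩) n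
    exact ⟨fun n => (f n).1, rfl, fun n => (f n).2, fun n => hg2 (f n)⟩
  · rintro ⟨R₀, h₀, hmin⟩
    obtain ⟨R', h', hlt⟩ := exists_lt_nice hS hA hstable R₀ h₀
    exact hmin R' h' hlt
end

section
/- Suppose the F-algebra A has an S-stable basis, and let 𝒰 be a maximal chain of S-nice subalgebras of A. Then T = ∩_{R ∈ 𝒰} R is an S-subalgebra of A lying over S (T ∩ F = S) but T is not an S-nice subalgebra of A; that is, TF is a proper subalgebra of A. -/
set_option linter.unusedSectionVars false

namespace Stmt16Aux

variable {S F A : Type*} [CommRing S] [IsDomain S] [Field F] [Ring A]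
    [Algebra S F] [IsFractionRing S F] [Algebra F A] [Algebra S A] [IsScalarTower S F A]

open Submodule

noncomputable def basOf {B : Set A} (h : IsBasisSet F B) : Module.Basis B F A :=
  Module.Basis.mk h.1 (by rw [Subtype.range_coe]; exact h.2.ge)

lemma basOf_repr_coe {B : Set A} (h : IsBasisSet F B) (i : B) :
    (basOf h).repr ↑i = Finsupp.single i 1 := by
  conv_lhs => rw [show (↑i : A) = basOf h i from (Module.Basis.mk_apply _ _ _).symm]
  exact (basOf h).repr_self i

def Isub (B : Set A) (s : S) (n : ℕ) : Submodule S A where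
  carrier := {a | ∀ m ∈ span S B, ∃ m' ∈ span S B, a * m = s ^ n • m'}
  add_mem' := by
    rintro a a' ha ha' m hm
    obtain ⟨m1, h1, e1⟩ := ha m hm
    obtain ⟨m2, h2, e2⟩ := ha' m hm
    exact ⟨m1 + m2, add_mem h1 h2, by rw [add_mul, e1, e2, smul_add]⟩
  zero_mem' := by
    intro m hm
    exact ⟨0, zero_mem _, by rw [zero_mul, smul_zero]⟩
  smul_mem' := by
    rintro σ a ha m hm
    obtain ⟨m1, h1, e1⟩ := ha m hm
    exact ⟨σ • m1, smul_mem _ _ h1, by rw [smul_mul_assoc, e1, smul_comm]⟩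

lemma mem_Isub {B : Set A} {s : S} {n : ℕ} {a : A} :
    a ∈ Isub B s n ↔ ∀ m ∈ span S B, ∃ m' ∈ span S B, a * m = s ^ n • m' := Iff.rfl

lemma mul_mem_Isub {B : Set A} {s : S} {n k : ℕ} {a a' : A}
    (ha : a ∈ Isub B s n) (ha' : a' ∈ Isub B s k) : a * a' ∈ Isub B s (n + k) := by
  intro m hm
  obtain ⟨m2, h2, e2⟩ := ha' m hm
  obtain ⟨m3, h3, e3⟩ := ha m2 h2
  refine ⟨m3, h3, ?_⟩
  rw [mul_assoc, e2, mul_smul_comm, e3, smul_smul]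
  congr 1
  ring

lemma Isub_antitone {B : Set A} {s : S} {n k : ℕ} (h : n ≤ k) : Isub B s k ≤ Isub B s n := by
  obtain ⟨c, rfl⟩ := Nat.exists_eq_add_of_le h
  intro a ha m hm
  obtain ⟨m', h', e⟩ := ha m hm
  refine ⟨s ^ c • m', smul_mem _ _ h', ?_⟩
  rw [e, smul_smul, ← pow_add]

lemma one_mem_Isub {B : Set A} {s : S} : (1 : A) ∈ Isub B s 0 :=
  fun m hm => ⟨m, hm, by rw [one_mul, pow_zero, one_smul]⟩

lemma pow_smul_mem_Isub {B : Set A} {s : S} {n : ℕ} {a : A} (ha : a ∈ Isub B s 0) :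
    s ^ n • a ∈ Isub B s n := by
  intro m hm
  obtain ⟨m', h', e⟩ := ha m hm
  refine ⟨m', h', ?_⟩
  rw [smul_mul_assoc, e, pow_zero, one_smul]

lemma mul_mem_spanB {B C : Set A} (hmul : ∀ c ∈ C, ∀ b ∈ B, c * b ∈ span S B)
    {c : A} (hc : c ∈ C) {m : A} (hm : m ∈ span S B) : c * m ∈ span S B := by
  induction hm using span_induction with
  | mem x hx => exact hmul c hc x hx
  | zero => rw [mul_zero]; exact zero_mem _
  | add x y hx hy ihx ihy => rw [mul_add]; exact add_mem ihx ihy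
  | smul σ x hx ih => rw [mul_smul_comm]; exact smul_mem _ _ ih

lemma spanC_le_Isub0 {B C : Set A} {s : S} (hmul : ∀ c ∈ C, ∀ b ∈ B, c * b ∈ span S B) :
    span S C ≤ Isub B s 0 := by
  rw [span_le]
  intro c hc m hm
  exact ⟨c * m, mul_mem_spanB hmul hc hm, by rw [pow_zero, one_smul]⟩

/-- coordinates of elements of `span S B` lie in the image of `S`. -/
lemma repr_mem_range {B : Set A} (h : IsBasisSet F B) {m : A}
    (hm : m ∈ span S (B : Set A)) (i : B) :
    ∃ τ : S, algebraMap S F τ = (basOf h).repr m i := by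
  induction hm using span_induction with
  | mem x hx =>
    classical
    refine ⟨if (⟨x, hx⟩ : B) = i then 1 else 0, ?_⟩
    have hr : (basOf h).repr x = Finsupp.single (⟨x, hx⟩ : B) 1 := basOf_repr_coe h ⟨x, hx⟩
    rw [hr, Finsupp.single_apply]
    split <;> simp
  | zero => exact ⟨0, by simp⟩
  | add x y hx hy ihx ihy =>
    obtain ⟨τ1, e1⟩ := ihx; obtain ⟨τ2, e2⟩ := ihy
    exact ⟨τ1 + τ2, by rw [map_add, map_add, Finsupp.add_apply, e1, e2]⟩
  | smul σ x hx ih =>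
    obtain ⟨τ, e⟩ := ih
    refine ⟨σ * τ, ?_⟩
    rw [← algebraMap_smul F σ x, map_smul, map_mul, Finsupp.smul_apply, e, smul_eq_mul]

/-- clearing denominators -/
lemma exists_denom {X : Set A} {a : A} (ha : a ∈ span F X) :
    ∃ d : S, d ≠ 0 ∧ d • a ∈ span S X := by
  rw [mem_span_set] at ha
  obtain ⟨c, hsupp, rfl⟩ := ha
  obtain ⟨d, hd⟩ := IsLocalization.exist_integer_multiples (nonZeroDivisors S) c.support c
  refine ⟨d, nonZeroDivisors.coe_ne_zero d, ?_⟩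
  rw [Finsupp.smul_sum]
  refine sum_mem fun x hx => ?_
  obtain ⟨τ, hτ⟩ := hd x hx
  show (d : S) • (c x • x) ∈ span S X
  have he : (d : S) • (c x • x) = τ • x := by
    rw [← smul_assoc, ← hτ]
    exact algebraMap_smul F τ x
  rw [he]
  exact smul_mem _ _ (subset_span (hsupp hx))


lemma exists_of_algebraMap_mem_Isub {B : Set A} (h : IsBasisSet F B) (i : B)
    {s : S} {n : ℕ} {x : F} (hx : algebraMap F A x ∈ Isub B s n) :
    ∃ τ : S, algebraMap S F (s ^ n * τ) = x := by
  classical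
  obtain ⟨m', hm', he⟩ := hx ↑i (subset_span i.2)
  obtain ⟨τ, hτ⟩ := repr_mem_range h hm' i
  refine ⟨τ, ?_⟩
  have lhs : (basOf h).repr (algebraMap F A x * ↑i) i = x := by
    rw [← Algebra.smul_def, map_smul, basOf_repr_coe, Finsupp.smul_apply,
      Finsupp.single_apply]
    simp
  have rhs : (basOf h).repr (s ^ n • m') i = algebraMap S F (s ^ n) * algebraMap S F τ := by
    rw [← algebraMap_smul F (s ^ n) m', map_smul, Finsupp.smul_apply, hτ, smul_eq_mul]
  rw [map_mul, ← rhs, ← he]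
  exact lhs

lemma coord_of_mem_Isub {B : Set A} (h : IsBasisSet F B) {s : S} {n : ℕ} {a : A}
    (ha : a ∈ Isub B s n) {d : S} (hd : d • (1 : A) ∈ span S (B : Set A)) (i : B) :
    ∃ τ : S, algebraMap S F d * (basOf h).repr a i
      = algebraMap S F (s ^ n) * algebraMap S F τ := by
  obtain ⟨m', hm', he⟩ := ha (d • 1) hd
  obtain ⟨τ, hτ⟩ := repr_mem_range h hm' i
  refine ⟨τ, ?_⟩
  have h1 : a * (d • (1 : A)) = d • a := by rw [mul_smul_comm, mul_one]
  have lhs : (basOf h).repr (a * (d • (1 : A))) i = algebraMap S F d * (basOf h).repr a i := by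
    rw [h1, ← algebraMap_smul F d a, map_smul, Finsupp.smul_apply, smul_eq_mul]
  have rhs : (basOf h).repr (s ^ n • m') i = algebraMap S F (s ^ n) * algebraMap S F τ := by
    rw [← algebraMap_smul F (s ^ n) m', map_smul, Finsupp.smul_apply, hτ, smul_eq_mul]
  rw [← lhs, he, rhs]

def stabAlg (B : Set A) : Subalgebra S A :=
  (Isub B (1 : S) 0).toSubalgebra one_mem_Isub
    (fun _ _ hx hy => mul_mem_Isub hx hy)

def midAlg (T : Subalgebra S A) (B : Set A) (s : S) (n : ℕ) : Subalgebra S A :=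
  (span S {(1 : A)} ⊔ (Subalgebra.toSubmodule T ⊓ Isub B s n)).toSubalgebra
    (mem_sup_left (mem_span_singleton_self 1))
    (by
      rintro x y hx hy
      rw [mem_sup] at hx hy
      obtain ⟨w, hw, z, hz, rfl⟩ := hx
      obtain ⟨w', hw', z', hz', rfl⟩ := hy
      obtain ⟨σ, rfl⟩ := mem_span_singleton.1 hw
      obtain ⟨σ', rfl⟩ := mem_span_singleton.1 hw'
      have e : (σ • (1 : A) + z) * (σ' • (1 : A) + z') =
          ((σ * σ') • (1 : A) + (σ • z' + (σ' • z + z * z'))) := by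
        rw [add_mul, mul_add, mul_add, smul_mul_assoc, smul_mul_assoc, one_mul, one_mul,
          mul_smul_comm, mul_one, smul_smul]
        abel
      rw [e]
      refine add_mem (mem_sup_left (mem_span_singleton.2 ⟨σ * σ', rfl⟩)) ?_
      refine add_mem (mem_sup_right (smul_mem _ _ hz')) ?_
      refine add_mem (mem_sup_right (smul_mem _ _ hz)) ?_
      refine mem_sup_right ⟨?_, ?_⟩
      · exact (Subalgebra.mem_toSubmodule _).2
          (mul_mem ((Subalgebra.mem_toSubmodule _).1 hz.1) ((Subalgebra.mem_toSubmodule _).1 hz'.1))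
      · exact Isub_antitone (Nat.le_add_right n n) (mul_mem_Isub hz.2 hz'.2))

lemma mem_midAlg {T : Subalgebra S A} {B : Set A} {s : S} {n : ℕ} {x : A} :
    x ∈ midAlg T B s n ↔
      x ∈ span S {(1 : A)} ⊔ (Subalgebra.toSubmodule T ⊓ Isub B s n) := Iff.rfl

lemma midAlg_le {T : Subalgebra S A} {B : Set A} {s : S} {n : ℕ} :
    midAlg T B s n ≤ T := by
  intro x hx
  rw [mem_midAlg, mem_sup] at hx
  obtain ⟨w, hw, z, hz, rfl⟩ := hx
  obtain ⟨σ, rfl⟩ := mem_span_singleton.1 hw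
  exact add_mem (T.smul_mem T.one_mem σ) ((Subalgebra.mem_toSubmodule _).1 hz.1)

lemma midAlg_antitone {T : Subalgebra S A} {B : Set A} {s : S} {n k : ℕ} (h : n ≤ k) :
    midAlg T B s k ≤ midAlg T B s n := by
  intro x hx
  rw [mem_midAlg] at hx ⊢
  exact sup_le_sup_left (inf_le_inf_left _ (Isub_antitone h)) _ hx

lemma nice_stabAlg {B C : Set A} (hB : IsBasisSet F B) (hC : IsBasisSet F C)
    (hmul : ∀ c ∈ C, ∀ b ∈ B, c * b ∈ span S B) (i : B) :
    IsNice S F (stabAlg (S := S) B) := by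
  constructor
  · intro x
    constructor
    · intro hx
      obtain ⟨τ, hτ⟩ := exists_of_algebraMap_mem_Isub hB i (s := (1 : S)) (n := 0) hx
      exact ⟨τ, by simpa using hτ⟩
    · rintro ⟨τ, rfl⟩
      rw [← IsScalarTower.algebraMap_apply S F A]
      exact Subalgebra.algebraMap_mem _ τ
  · have hsub : (C : Set A) ⊆ (stabAlg (S := S) B : Set A) := fun c hc =>
      spanC_le_Isub0 hmul (subset_span hc)
    exact eq_top_iff.2 (hC.2 ▸ span_mono hsub)

lemma nice_midAlg {B C : Set A} (hB : IsBasisSet F B) (hC : IsBasisSet F C)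
    (hmul : ∀ c ∈ C, ∀ b ∈ B, c * b ∈ span S B) (i : B) {s : S} (hs : s ≠ 0) (n : ℕ)
    (T : Subalgebra S A) (hspan : span F (T : Set A) = ⊤) :
    IsNice S F (midAlg T B s n) := by
  constructor
  · intro x
    constructor
    · intro hx
      rw [mem_midAlg, mem_sup] at hx
      obtain ⟨w, hw, z, hz, hsum⟩ := hx
      obtain ⟨σ, rfl⟩ := mem_span_singleton.1 hw
      have hz_eq : z = algebraMap F A (x - algebraMap S F σ) := by
        rw [map_sub, ← IsScalarTower.algebraMap_apply S F A, Algebra.algebraMap_eq_smul_one (A := A) σ]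
        rw [eq_sub_iff_add_eq, add_comm]
        exact hsum
      have hzI : algebraMap F A (x - algebraMap S F σ) ∈ Isub B s n := hz_eq ▸ hz.2
      obtain ⟨τ, hτ⟩ := exists_of_algebraMap_mem_Isub hB i hzI
      exact ⟨σ + s ^ n * τ, by rw [map_add, hτ]; ring⟩
    · rintro ⟨τ, rfl⟩
      rw [mem_midAlg, ← IsScalarTower.algebraMap_apply S F A, Algebra.algebraMap_eq_smul_one (A := A) τ]
      exact mem_sup_left (mem_span_singleton.2 ⟨τ, rfl⟩)
  · rw [eq_top_iff, ← hspan]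
    rw [span_le]
    intro a ha
    have haC : a ∈ span F C := by rw [hC.2]; exact mem_top
    obtain ⟨d, hd0, hdmem⟩ := exists_denom (S := S) haC
    have h1 : (s ^ n * d) • a ∈ Isub B s n := by
      rw [mul_smul]
      exact pow_smul_mem_Isub (spanC_le_Isub0 hmul hdmem)
    have h2 : (s ^ n * d) • a ∈ midAlg T B s n := by
      rw [mem_midAlg]
      exact mem_sup_right ⟨(Subalgebra.mem_toSubmodule _).2
        ((T.toSubmodule.smul_mem _ ha : (s ^ n * d) • a ∈ T.toSubmodule)), h1⟩
    have hc0 : algebraMap S F (s ^ n * d) ≠ 0 := by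
      intro h0
      exact (mul_ne_zero (pow_ne_zero n hs) hd0)
        (IsFractionRing.injective S F (by rw [h0, map_zero]))
    have : a = (algebraMap S F (s ^ n * d))⁻¹ • ((s ^ n * d) • a) := by
      rw [← algebraMap_smul F (s ^ n * d) a, inv_smul_smul₀ hc0]
    rw [this]
    exact Submodule.smul_mem _ _ (subset_span h2)

lemma exists_nondvd (hS : ¬ IsField S) {p : S} (hp : p ≠ 0) :
    ∃ s : S, s ≠ 0 ∧ ∃ n : ℕ, ¬ s ^ n ∣ p := by
  by_cases hu : IsUnit p
  · have hex : ∃ a : S, a ≠ 0 ∧ ¬ IsUnit a := by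
      by_contra h
      push_neg at h
      exact hS ⟨exists_pair_ne S, mul_comm, fun {a} ha => (h a ha).exists_right_inv⟩
    obtain ⟨a, ha0, hau⟩ := hex
    refine ⟨a, ha0, 1, fun hdvd => hau ?_⟩
    rw [pow_one] at hdvd
    exact isUnit_of_dvd_unit hdvd hu
  · refine ⟨p, hp, 2, fun hdvd => hu ?_⟩
    obtain ⟨c, hc⟩ := hdvd
    have : p * 1 = p * (p * c) := by rw [mul_one, ← mul_assoc, ← sq]; exact hc
    exact IsUnit.of_mul_eq_one c (mul_left_cancel₀ hp this).symm

end Stmt16Aux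

open Stmt16Aux Submodule in
/-- Suppose `A ≠ F` has an `S`-stable basis and `𝒰` is a maximal chain of
`S`-nice subalgebras of `A`. Then `T = ⋂_{R ∈ 𝒰} R` lies over `S` (`T ∩ F = S`) but is
not `S`-nice: its localization `TF` is a proper subalgebra of `A`. -/
theorem stmt16 {S F A : Type*} [CommRing S] [IsDomain S] [Field F] [Ring A]
    [Algebra S F] [IsFractionRing S F] [Algebra F A] [Algebra S A] [IsScalarTower S F A]
    (hS : ¬ IsField S) (hA : ¬ Function.Surjective (algebraMap F A))
    (hstable : ∃ B : Set A, IsStableBasis S F B)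
    (𝒰 : Set (Subalgebra S A)) (h𝒰 : ∀ R ∈ 𝒰, IsNice S F R)
    (hchain : IsChain (· ≤ ·) 𝒰)
    (hmax : ∀ 𝒱 : Set (Subalgebra S A), 𝒰 ⊆ 𝒱 → (∀ R ∈ 𝒱, IsNice S F R) →
      IsChain (· ≤ ·) 𝒱 → 𝒱 = 𝒰) :
    (∀ x : F, algebraMap F A x ∈ sInf 𝒰 ↔ ∃ s : S, algebraMap S F s = x) ∧
      Submodule.span F ((sInf 𝒰 : Subalgebra S A) : Set A) ≠ ⊤ := by
    classical
  obtain ⟨B, hB, C, hC, hmul⟩ := hstable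
  have hntA : Nontrivial A := by
    by_contra h
    rw [not_nontrivial_iff_subsingleton] at h
    exact hA fun a => ⟨0, Subsingleton.elim _ _⟩
  have hBne : B.Nonempty := by
    rcases Set.eq_empty_or_nonempty B with rfl | h
    · have := hB.2
      rw [span_empty] at this
      exact absurd this bot_ne_top
    · exact h
  obtain ⟨b₀, hb₀⟩ := hBne
  let i₀ : B := ⟨b₀, hb₀⟩
  have hEnice : IsNice S F (stabAlg (S := S) B) := nice_stabAlg hB hC hmul i₀
  have hUne : 𝒰.Nonempty := by
    by_contra h
    rw [Set.not_nonempty_iff_eq_empty] at h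
    subst h
    have := hmax {stabAlg (S := S) B} (Set.empty_subset _)
      (by
        rintro R hR
        rw [Set.mem_singleton_iff] at hR
        subst hR
        exact hEnice)
      Set.subsingleton_singleton.isChain
    exact absurd this (Set.singleton_ne_empty _)
  obtain ⟨R₀, hR₀⟩ := hUne
  have part1 : ∀ x : F, algebraMap F A x ∈ sInf 𝒰 ↔ ∃ s : S, algebraMap S F s = x := by
    intro x
    constructor
    · intro hx
      exact ((h𝒰 R₀ hR₀).1 x).1 (Algebra.mem_sInf.1 hx R₀ hR₀)
    · rintro ⟨τ, rfl⟩
      rw [← IsScalarTower.algebraMap_apply S F A]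
      exact Subalgebra.algebraMap_mem _ τ
  refine ⟨part1, ?_⟩
  intro hspan
  have ht : ∃ t ∈ (sInf 𝒰 : Subalgebra S A), ∀ x : F, algebraMap F A x ≠ t := by
    by_contra h
    push_neg at h
    apply hA
    intro a
    have haT : a ∈ Submodule.span F ((sInf 𝒰 : Subalgebra S A) : Set A) := by
      rw [hspan]; exact mem_top
    have hle : Submodule.span F ((sInf 𝒰 : Subalgebra S A) : Set A)
        ≤ LinearMap.range (Algebra.linearMap F A) := by
      rw [span_le]
      intro u hu
      obtain ⟨x, hx⟩ := h u hu
      exact ⟨x, hx⟩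
    exact hle haT
  obtain ⟨t, htT, htn⟩ := ht
  set bB := basOf hB with hbBdef
  -- find indices with nonzero cross-determinant
  have hij : ∃ i j : B, bB.repr t i * bB.repr 1 j ≠ bB.repr t j * bB.repr 1 i := by
    by_contra hcon
    push_neg at hcon
    have hex : ∃ i0 : B, bB.repr 1 i0 ≠ 0 := by
      by_contra hz
      push_neg at hz
      have h10 : bB.repr (1 : A) = 0 := Finsupp.ext fun k => hz k
      have : (1 : A) = 0 := by
        apply bB.repr.injective
        rw [h10, map_zero]
      exact one_ne_zero this
    obtain ⟨i0, hi0⟩ := hex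
    refine htn (bB.repr t i0 * (bB.repr 1 i0)⁻¹) ?_
    rw [Algebra.algebraMap_eq_smul_one]
    apply bB.repr.injective
    refine Finsupp.ext fun k => ?_
    rw [map_smul, Finsupp.smul_apply, smul_eq_mul]
    rw [mul_assoc, mul_comm (bB.repr 1 i0)⁻¹ (bB.repr 1 k), ← mul_assoc, hcon i0 k,
      mul_assoc, mul_inv_cancel₀ hi0, mul_one]
  obtain ⟨i, j, hijne⟩ := hij
  set μ : F := bB.repr t i * bB.repr 1 j - bB.repr t j * bB.repr 1 i with hμdef
  have hμ0 : μ ≠ 0 := sub_ne_zero.2 hijne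
  have h1span : (1 : A) ∈ Submodule.span F B := by rw [hB.2]; exact mem_top
  obtain ⟨d₀, hd₀0, hd₀⟩ := exists_denom (S := S) h1span
  obtain ⟨⟨p1, q1⟩, hq1⟩ := IsLocalization.surj (nonZeroDivisors S) (bB.repr 1 i)
  obtain ⟨⟨p2, q2⟩, hq2⟩ := IsLocalization.surj (nonZeroDivisors S) (bB.repr 1 j)
  obtain ⟨⟨p3, q3⟩, hq3⟩ := IsLocalization.surj (nonZeroDivisors S) μ
  have hp3 : p3 ≠ 0 := by
    intro h0
    rw [h0, map_zero] at hq3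
    rcases mul_eq_zero.1 hq3 with h | h
    · exact hμ0 h
    · exact IsFractionRing.to_map_ne_zero_of_mem_nonZeroDivisors q3.2 h
  have hq10 : (q1 : S) ≠ 0 := nonZeroDivisors.coe_ne_zero q1
  have hq20 : (q2 : S) ≠ 0 := nonZeroDivisors.coe_ne_zero q2
  set pstar : S := d₀ * ((q1 : S) * (q2 : S)) * p3 with hpstardef
  have hpstar : pstar ≠ 0 := mul_ne_zero (mul_ne_zero hd₀0 (mul_ne_zero hq10 hq20)) hp3
  obtain ⟨s, hs0, n, hndvd⟩ := exists_nondvd hS hpstar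
  apply hndvd
  -- the descending chain of nice subalgebras
  set T : Subalgebra S A := sInf 𝒰 with hTdef
  have hWeq := hmax (𝒰 ∪ Set.range (fun k => midAlg T B s k)) Set.subset_union_left
    (by
      rintro R (hR | ⟨k, rfl⟩)
      · exact h𝒰 R hR
      · exact nice_midAlg hB hC hmul i₀ hs0 k T hspan)
    (by
      rintro x (hx | ⟨k, rfl⟩) y (hy | ⟨l, rfl⟩) hne
      · exact hchain hx hy hne
      · exact Or.inr (le_trans midAlg_le (sInf_le hx))
      · exact Or.inl (le_trans midAlg_le (sInf_le hy))
      · rcases le_total k l with h | h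
        · exact Or.inr (midAlg_antitone h)
        · exact Or.inl (midAlg_antitone h))
  have hTn : midAlg T B s n ∈ 𝒰 := by
    rw [← hWeq]
    exact Set.mem_union_right _ ⟨n, rfl⟩
  have htmem : t ∈ midAlg T B s n := sInf_le hTn htT
  rw [mem_midAlg, mem_sup] at htmem
  obtain ⟨w, hw, z, hz, hsum⟩ := htmem
  obtain ⟨σ, rfl⟩ := mem_span_singleton.1 hw
  obtain ⟨τi, hτi⟩ := coord_of_mem_Isub hB hz.2 hd₀ i
  obtain ⟨τj, hτj⟩ := coord_of_mem_Isub hB hz.2 hd₀ j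
  have hz_eq : z = t - σ • (1 : A) := eq_sub_of_add_eq' hsum
  have hrz : ∀ k : B, bB.repr z k = bB.repr t k - algebraMap S F σ * bB.repr 1 k := by
    intro k
    rw [hz_eq, map_sub, ← algebraMap_smul F σ (1 : A), map_smul, Finsupp.sub_apply,
      Finsupp.smul_apply, smul_eq_mul]
  rw [hrz i] at hτi
  rw [hrz j] at hτj
  refine ⟨(τi * (p2 * (q1 : S)) - τj * (p1 * (q2 : S))) * (q3 : S), ?_⟩
  apply IsFractionRing.injective S F
  simp only [hpstardef, map_mul, map_sub]
  linear_combination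
    (-(algebraMap S F d₀ * algebraMap S F (q1 : S) * algebraMap S F (q2 : S))) * hq3
    + (algebraMap S F (q1 : S) * algebraMap S F (q2 : S) * algebraMap S F (q3 : S)
        * bB.repr 1 j) * hτi
    - (algebraMap S F (q1 : S) * algebraMap S F (q2 : S) * algebraMap S F (q3 : S)
        * bB.repr 1 i) * hτj
    - (algebraMap S F (s ^ n) * algebraMap S F τj * algebraMap S F (q2 : S)
        * algebraMap S F (q3 : S)) * hq1
    + (algebraMap S F (s ^ n) * algebraMap S F τi * algebraMap S F (q1 : S)
        * algebraMap S F (q3 : S)) * hq2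
end

section
/- Let v be a valuation on F with value group Γ_v and valuation ring O_v, and let R be any O_v-algebra. Define w(0) = ∞ and, for 0 ≠ x ∈ R, w(x) to be the cut of Γ_v whose left set is v(S_x) where S_x = {a ∈ O_v : xR ⊆ aR}. Then w is a quasi-valuation on R with values in the cut monoid M(Γ_v) ∪ {∞}: w(xy) ≥ w(x) + w(y) and w(x+y) ≥ min{w(x), w(y)} for all x, y ∈ R. -/
open Pointwise

/-- The left set `v(S_x)` of the cut `w(x)` assigned by the filter quasi-valuation:
`{γ < 0} ∪ {v(a) : a ∈ O_v, xR ⊆ aR}`, an initial subset of the value group `Γ`. -/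
def vSupp {F Γ : Type*} [Field F] [AddCommGroup Γ] [LinearOrder Γ] [IsOrderedAddMonoid Γ]
    (v : F → WithTop Γ) (O : Subring F) {R : Type*} [Ring R] [Algebra O R]
    (x : R) : Set Γ :=
  {γ : Γ | γ < 0 ∨ ∃ a : O, (∀ y : R, ∃ z : R, x * y = a • z) ∧ v (a : F) = (γ : WithTop Γ)}

/-- Let `v` be an (additive) valuation on `F` with value group `Γ` and
valuation ring `O = O_v`, and `R` any `O_v`-algebra. Setting `w(0) = ∞` and, for
`x ≠ 0`, `w(x)` the cut of `Γ` with left set `v(S_x)`, `w` is a quasi-valuation with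
values in the cut monoid: each left set is an initial (lower) subset of `Γ`, the left
set of `w(x) + w(y)` (pointwise sum) is contained in that of `w(xy)`, and the left set
of `min{w(x), w(y)}` (the intersection) is contained in that of `w(x + y)`. -/
theorem stmt18 {F Γ : Type*} [Field F] [AddCommGroup Γ] [LinearOrder Γ] [IsOrderedAddMonoid Γ]
    (v : F → WithTop Γ)
    (hv0 : ∀ x : F, v x = ⊤ ↔ x = 0)
    (hvmul : ∀ x y : F, v (x * y) = v x + v y)
    (hvadd : ∀ x y : F, min (v x) (v y) ≤ v (x + y))
    (hsurj : ∀ γ : Γ, ∃ x : F, v x = (γ : WithTop Γ))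
    (O : Subring F) (hO : ∀ a : F, a ∈ O ↔ 0 ≤ v a)
    {R : Type*} [Ring R] [Algebra O R] :
    (∀ x : R, IsLowerSet (vSupp v O x)) ∧
    (∀ x y : R, vSupp v O x + vSupp v O y ⊆ vSupp v O (x * y)) ∧
    (∀ x y : R, vSupp v O x ∩ vSupp v O y ⊆ vSupp v O (x + y)) := by
  -- value of a quotient
  have hdiv : ∀ (a b : F) (α β : Γ), v a = (α : WithTop Γ) → v b = (β : WithTop Γ) →
      b ≠ 0 → v (a / b) = ((α - β : Γ) : WithTop Γ) := by
    intro a b α β ha hb hb0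
    have h := hvmul (a / b) b
    rw [div_mul_cancel₀ _ hb0, ha, hb] at h
    cases hq : v (a / b) with
    | top => rw [hq, top_add] at h; exact absurd h WithTop.coe_ne_top
    | coe q =>
        rw [hq, ← WithTop.coe_add] at h
        have : q = α - β := eq_sub_of_add_eq (WithTop.coe_inj.mp h).symm
        rw [this]
  have hne : ∀ (b : F) (β : Γ), v b = (β : WithTop Γ) → b ≠ 0 := by
    intro b β hb h0
    rw [(hv0 b).mpr h0] at hb
    exact WithTop.coe_ne_top hb.symm
  -- lower set
  have key : ∀ x : R, IsLowerSet (vSupp v O x) := by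
    intro x γ γ' hle hγ
    rcases lt_or_ge γ' 0 with h | h
    · exact Or.inl h
    rcases hγ with h0 | ⟨a, hxa, hva⟩
    · exact absurd (hle.trans_lt h0) (not_lt.mpr h)
    · -- pick b with v b = γ'
      obtain ⟨b, hb⟩ := hsurj γ'
      have hb0 : b ≠ 0 := hne b γ' hb
      have hbO : b ∈ O := by
        rw [hO, hb]
        exact_mod_cast h
      have hc : v ((a : F) / b) = ((γ - γ' : Γ) : WithTop Γ) := hdiv _ _ _ _ hva hb
        hb0
      have hcO : (a : F) / b ∈ O := by
        rw [hO, hc]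
        exact_mod_cast sub_nonneg.mpr hle
      refine Or.inr ⟨⟨b, hbO⟩, ?_, hb⟩
      intro y
      obtain ⟨z, hz⟩ := hxa y
      refine ⟨(⟨(a : F) / b, hcO⟩ : O) • z, ?_⟩
      rw [hz, ← mul_smul]
      congr 1
      ext
      exact (mul_div_cancel₀ (a : F) hb0).symm
  refine ⟨key, ?_, ?_⟩
  · -- multiplicativity
    have claimA : ∀ (x y : R) (γ : Γ), γ ∈ vSupp v O x → γ ∈ vSupp v O (x * y) := by
      intro x y γ hγ
      rcases hγ with h | ⟨a, hxa, hva⟩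
      · exact Or.inl h
      · refine Or.inr ⟨a, fun r => ?_, hva⟩
        obtain ⟨z, hz⟩ := hxa (y * r)
        exact ⟨z, by rw [mul_assoc, hz]⟩
    have claimB : ∀ (x y : R) (γ : Γ), γ ∈ vSupp v O y → γ ∈ vSupp v O (x * y) := by
      intro x y γ hγ
      rcases hγ with h | ⟨b, hyb, hvb⟩
      · exact Or.inl h
      · refine Or.inr ⟨b, fun r => ?_, hvb⟩
        obtain ⟨z, hz⟩ := hyb r
        exact ⟨x * z, by rw [mul_assoc, hz, mul_smul_comm]⟩
    intro x y γ hγ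
    rw [Set.mem_add] at hγ
    obtain ⟨γ₁, hγ₁, γ₂, hγ₂, rfl⟩ := hγ
    rcases hγ₁ with h1 | ⟨a, hxa, hva⟩
    · rcases hγ₂ with h2 | ⟨b, hyb, hvb⟩
      · exact Or.inl (add_neg h1 h2)
      · exact key (x * y) (by simpa using add_le_add_right h1.le γ₂ : γ₁ + γ₂ ≤ γ₂)
          (claimB x y γ₂ (Or.inr ⟨b, hyb, hvb⟩))
    · rcases hγ₂ with h2 | ⟨b, hyb, hvb⟩
      · exact key (x * y) (by simpa using add_le_add_left h2.le γ₁ : γ₁ + γ₂ ≤ γ₁)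
          (claimA x y γ₁ (Or.inr ⟨a, hxa, hva⟩))
      · refine Or.inr ⟨a * b, fun r => ?_, ?_⟩
        · obtain ⟨z, hz⟩ := hyb r
          obtain ⟨z', hz'⟩ := hxa z
          refine ⟨z', ?_⟩
          rw [mul_assoc, hz, mul_smul_comm, hz', ← mul_smul, mul_comm b a]
        · push_cast
          rw [hvmul, hva, hvb, ← WithTop.coe_add]
  · -- additivity
    intro x y γ ⟨h1, h2⟩
    rcases lt_or_ge γ 0 with h | h
    · exact Or.inl h
    rcases h1 with h1 | ⟨a, hxa, hva⟩
    · exact absurd h1 (not_lt.mpr h)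
    rcases h2 with h2 | ⟨b, hyb, hvb⟩
    · exact absurd h2 (not_lt.mpr h)
    have ha0 : (a : F) ≠ 0 := hne _ _ hva
    have hc : v ((b : F) / a) = ((γ - γ : Γ) : WithTop Γ) := hdiv _ _ _ _ hvb hva ha0
    have hcO : (b : F) / a ∈ O := by
      rw [hO, hc]
      simp
    refine Or.inr ⟨a, fun r => ?_, hva⟩
    obtain ⟨z₁, hz₁⟩ := hxa r
    obtain ⟨z₂, hz₂⟩ := hyb r
    refine ⟨z₁ + (⟨(b : F) / a, hcO⟩ : O) • z₂, ?_⟩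
    rw [add_mul, hz₁, hz₂, smul_add, ← mul_smul]
    congr 2
    ext
    exact (mul_div_cancel₀ (b : F) ha0).symm
end

section
/- Let C be a non-Noetherian integral domain with field of fractions F, and let I_1 ⊂ I_2 ⊂ ... be an infinite strictly ascending chain of nonzero ideals of C. For n ≥ 2 and each k, let R_k ⊆ M_n(F) be the set of matrices with entries in C except that the entries in the last column above the bottom row lie in I_k. Then each R_k is a C-nice subalgebra of M_n(F), and R_1 ⊂ R_2 ⊂ ... is an infinite strictly ascending chain of C-nice subalgebras of M_n(F). -/
set_option linter.unusedVariables false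

open Matrix

section Aux

variable {C : Type*} (F : Type*) [CommRing C] [Field F] [Algebra C F]

/-- The set of matrices with entries in `C`, except the last column above the
bottom row, which lies in `I`. -/
def stmt19niceSet (I : Ideal C) (m : ℕ) : Set (Matrix (Fin (m + 2)) (Fin (m + 2)) F) :=
  {M | ∀ i j : Fin (m + 2),
    if j = Fin.last (m + 1) ∧ i ≠ Fin.last (m + 1)
    then ∃ c ∈ I, algebraMap C F c = M i j
    else ∃ c : C, algebraMap C F c = M i j}

variable {F}

theorem stmt19_sum_ideal (I : Ideal C) {ι : Type*} (s : Finset ι) (f : ι → F)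
    (h : ∀ l ∈ s, ∃ c ∈ I, algebraMap C F c = f l) :
    ∃ c ∈ I, algebraMap C F c = ∑ l ∈ s, f l := by
  classical
  induction s using Finset.induction_on with
  | empty => exact ⟨0, I.zero_mem, by simp⟩
  | @insert a s ha ih =>
    obtain ⟨c, hc, hc'⟩ := h a (Finset.mem_insert_self a s)
    obtain ⟨d, hd, hd'⟩ := ih fun l hl => h l (Finset.mem_insert_of_mem hl)
    exact ⟨c + d, I.add_mem hc hd, by rw [map_add, hc', hd', Finset.sum_insert ha]⟩

theorem stmt19_sum_range {ι : Type*} (s : Finset ι) (f : ι → F)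
    (h : ∀ l ∈ s, ∃ c : C, algebraMap C F c = f l) :
    ∃ c : C, algebraMap C F c = ∑ l ∈ s, f l := by
  classical
  induction s using Finset.induction_on with
  | empty => exact ⟨0, by simp⟩
  | @insert a s ha ih =>
    obtain ⟨c, hc'⟩ := h a (Finset.mem_insert_self a s)
    obtain ⟨d, hd'⟩ := ih fun l hl => h l (Finset.mem_insert_of_mem hl)
    exact ⟨c + d, by rw [map_add, hc', hd', Finset.sum_insert ha]⟩

theorem stmt19_entry_range {I : Ideal C} {m : ℕ}
    {M : Matrix (Fin (m + 2)) (Fin (m + 2)) F} (hM : M ∈ stmt19niceSet F I m)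
    (i j : Fin (m + 2)) : ∃ c : C, algebraMap C F c = M i j := by
  have h := hM i j
  split_ifs at h with hc
  · obtain ⟨c, _, hc'⟩ := h
    exact ⟨c, hc'⟩
  · exact h

theorem stmt19_stdBasis_mem (I : Ideal C) (m : ℕ) (i j : Fin (m + 2)) (c : C)
    (h : j = Fin.last (m + 1) ∧ i ≠ Fin.last (m + 1) → c ∈ I) :
    Matrix.single i j (algebraMap C F c) ∈ stmt19niceSet F I m := by
  intro i' j'
  by_cases he : i = i' ∧ j = j'
  · obtain ⟨rfl, rfl⟩ := he
    split_ifs with h'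
    · exact ⟨c, h h', (Matrix.single_apply_same i j _).symm⟩
    · exact ⟨c, (Matrix.single_apply_same i j _).symm⟩
  · split_ifs with h'
    · exact ⟨0, I.zero_mem, by rw [map_zero, Matrix.single_apply_of_ne _ _ _ _ _ he]⟩
    · exact ⟨0, by rw [map_zero, Matrix.single_apply_of_ne _ _ _ _ _ he]⟩

/-- `stmt19niceSet` as a `C`-subalgebra. -/
def stmt19Rsub (F : Type*) [Field F] [Algebra C F] (I : Ideal C) (m : ℕ) :
    Subalgebra C (Matrix (Fin (m + 2)) (Fin (m + 2)) F) where
  carrier := stmt19niceSet F I m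
  zero_mem' := by
    intro i j
    split_ifs
    · exact ⟨0, I.zero_mem, by simp⟩
    · exact ⟨0, by simp⟩
  add_mem' := by
    intro M N hM hN i j
    have h1 := hM i j
    have h2 := hN i j
    split_ifs at h1 h2 ⊢ with hc
    · obtain ⟨c, hc1, hc2⟩ := h1
      obtain ⟨d, hd1, hd2⟩ := h2
      exact ⟨c + d, I.add_mem hc1 hd1, by rw [map_add, hc2, hd2, Matrix.add_apply]⟩
    · obtain ⟨c, hc2⟩ := h1
      obtain ⟨d, hd2⟩ := h2
      exact ⟨c + d, by rw [map_add, hc2, hd2, Matrix.add_apply]⟩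
  algebraMap_mem' := by
    intro r i j
    rw [Matrix.algebraMap_matrix_apply]
    split_ifs with hc hd hd
    · exact absurd (hd.trans hc.1) hc.2
    · exact ⟨0, I.zero_mem, map_zero _⟩
    · exact ⟨r, rfl⟩
    · exact ⟨0, map_zero _⟩
  one_mem' := by
    intro i j
    rw [Matrix.one_apply]
    split_ifs with hc hd hd
    · exact absurd (hd.trans hc.1) hc.2
    · exact ⟨0, I.zero_mem, map_zero _⟩
    · exact ⟨1, map_one _⟩
    · exact ⟨0, map_zero _⟩
  mul_mem' := by
    intro M N hM hN i j
    rw [Matrix.mul_apply]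
    split_ifs with hc
    · refine stmt19_sum_ideal I _ _ fun l _ => ?_
      by_cases hl : l = Fin.last (m + 1)
      · have h1 := hM i l
        rw [if_pos ⟨hl, hc.2⟩] at h1
        have h2 := hN l j
        rw [if_neg (fun h => h.2 hl)] at h2
        obtain ⟨c, hcI, hc'⟩ := h1
        obtain ⟨d, hd'⟩ := h2
        exact ⟨c * d, I.mul_mem_right d hcI, by rw [_root_.map_mul, hc', hd']⟩
      · have h1 := hM i l
        rw [if_neg (fun h => hl h.1)] at h1
        have h2 := hN l j
        rw [if_pos ⟨hc.1, hl⟩] at h2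
        obtain ⟨d, hd'⟩ := h1
        obtain ⟨c, hcI, hc'⟩ := h2
        exact ⟨d * c, I.mul_mem_left d hcI, by rw [_root_.map_mul, hc', hd']⟩
    · refine stmt19_sum_range _ _ fun l _ => ?_
      obtain ⟨c, hc'⟩ := stmt19_entry_range hM i l
      obtain ⟨d, hd'⟩ := stmt19_entry_range hN l j
      exact ⟨c * d, by rw [_root_.map_mul, hc', hd']⟩

end Aux

theorem stmt19_mem_Rsub_iff {C F : Type*} [CommRing C] [Field F] [Algebra C F]
    {I : Ideal C} {m : ℕ} {M : Matrix (Fin (m + 2)) (Fin (m + 2)) F} :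
    M ∈ stmt19Rsub F I m ↔ M ∈ stmt19niceSet F I m := Iff.rfl



/-- Let `C` be a non-Noetherian integral domain with fraction field `F`
and `I₁ ⊂ I₂ ⊂ ⋯` an infinite strictly ascending chain of nonzero ideals of `C`. For
`n = m + 2 ≥ 2`, let `Rₖ ⊆ Mₙ(F)` be the matrices with entries in `C`, except that the
entries of the last column above the bottom row lie in `Iₖ`. Then each `Rₖ` is a
`C`-nice subalgebra of `Mₙ(F)` (`Rₖ ∩ F = C` and `Rₖ F = Mₙ(F)`), and
`R₁ ⊂ R₂ ⊂ ⋯` is an infinite strictly ascending chain of such subalgebras. -/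
theorem stmt19 {C F : Type*} [CommRing C] [IsDomain C] [Field F] [Algebra C F]
    [IsFractionRing C F]
    (hC : ¬ IsNoetherianRing C)
    (I : ℕ → Ideal C) (hI0 : ∀ k, I k ≠ ⊥) (hIlt : ∀ k, I k < I (k + 1))
    (m : ℕ)
    (Rset : ℕ → Set (Matrix (Fin (m + 2)) (Fin (m + 2)) F))
    (hRset : ∀ k, Rset k =
      {M | ∀ i j : Fin (m + 2),
        if j = Fin.last (m + 1) ∧ i ≠ Fin.last (m + 1)
        then ∃ c ∈ I k, algebraMap C F c = M i j
        else ∃ c : C, algebraMap C F c = M i j}) :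
    (∀ k, ∃ Rk : Subalgebra C (Matrix (Fin (m + 2)) (Fin (m + 2)) F),
        (Rk : Set (Matrix (Fin (m + 2)) (Fin (m + 2)) F)) = Rset k ∧
        (∀ x : F, algebraMap F (Matrix (Fin (m + 2)) (Fin (m + 2)) F) x ∈ Rk ↔
          ∃ c : C, algebraMap C F c = x) ∧
        Submodule.span F (Rset k) = ⊤) ∧
      ∀ k, Rset k ⊂ Rset (k + 1) := by
  classical
  have hinj : Function.Injective (algebraMap C F) := IsFractionRing.injective C F
  have hlast0 : (0 : Fin (m + 2)) ≠ Fin.last (m + 1) := by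
    simp [Fin.ext_iff]
  have hset : ∀ k, Rset k = stmt19niceSet F (I k) m := fun k => hRset k
  constructor
  · intro k
    refine ⟨stmt19Rsub F (I k) m, (hset k).symm, ?_, ?_⟩
    · intro x
      constructor
      · intro hx
        have h := (stmt19_mem_Rsub_iff.mp hx) 0 0
        rw [if_neg (fun hh => hh.2 hh.1)] at h
        obtain ⟨c, hc⟩ := h
        exact ⟨c, hc.trans (by simp [Matrix.algebraMap_matrix_apply])⟩
      · rintro ⟨c, rfl⟩
        rw [← IsScalarTower.algebraMap_apply C F (Matrix (Fin (m + 2)) (Fin (m + 2)) F)]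
        exact (stmt19Rsub F (I k) m).algebraMap_mem c
    · rw [hset k, eq_top_iff]
      rintro M -
      have hb : ∀ (i j : Fin (m + 2)) (a : F),
          Matrix.single i j a ∈ Submodule.span F (stmt19niceSet F (I k) m) := by
        intro i j a
        by_cases hc : j = Fin.last (m + 1) ∧ i ≠ Fin.last (m + 1)
        · obtain ⟨c, hcI, hc0⟩ := Submodule.exists_mem_ne_zero_of_ne_bot (hI0 k)
          have hmem := stmt19_stdBasis_mem (F := F) (I k) m i j c (fun _ => hcI)
          have hne : algebraMap C F c ≠ 0 := fun h => hc0 (hinj (h.trans (map_zero _).symm))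
          have he : Matrix.single i j a
              = (a * (algebraMap C F c)⁻¹) • Matrix.single i j (algebraMap C F c) := by
            rw [Matrix.smul_single, smul_eq_mul, mul_assoc, inv_mul_cancel₀ hne, mul_one]
          rw [he]
          exact Submodule.smul_mem _ _ (Submodule.subset_span hmem)
        · have hmem := stmt19_stdBasis_mem (F := F) (I k) m i j 1 (fun h => absurd h hc)
          have he : Matrix.single i j a = a • Matrix.single i j (algebraMap C F 1) := by
            rw [_root_.map_one, Matrix.smul_single, smul_eq_mul, mul_one]
          rw [he]
          exact Submodule.smul_mem _ _ (Submodule.subset_span hmem)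
      rw [Matrix.matrix_eq_sum_single M]
      exact Submodule.sum_mem _ fun i _ => Submodule.sum_mem _ fun j _ => hb i j _
  · intro k
    rw [hset k, hset (k + 1), Set.ssubset_def]
    constructor
    · intro M hM i j
      have h := hM i j
      split_ifs at h ⊢ with hc
      · obtain ⟨c, hcI, h'⟩ := h
        exact ⟨c, (hIlt k).le hcI, h'⟩
      · exact h
    · intro hsub
      obtain ⟨c, hck1, hck⟩ := SetLike.exists_of_lt (hIlt k)
      have hmem := stmt19_stdBasis_mem (F := F) (I (k + 1)) m 0 (Fin.last (m + 1)) c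
        (fun _ => hck1)
      have h := hsub hmem 0 (Fin.last (m + 1))
      rw [if_pos ⟨rfl, hlast0⟩] at h
      obtain ⟨c', hc', he⟩ := h
      rw [Matrix.single_apply_same] at he
      exact hck (hinj he ▸ hc')
end
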